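/- arXiv:2107.04185 — 6 statements merged into one kernel-verified Lean document; each statement's English description precedes it below -/
import Mathlib

section
/- Let a be an action profile in ℝⁿ all of whose entries are strictly positive. If a is Pareto efficient, then the spectral radius of the benefits matrix B(a) equals 1. -/
open Matrix

/-- The spectral radius of a real square matrix: the largest modulus of a
(complex) eigenvalue, i.e. of an element of the spectrum of the matrix viewed
over `ℂ`. -/
noncomputable def specRad {n : ℕ} (M : Matrix (Fin n) (Fin n) ℝ) : ℝ :=
  sSup ((fun z : ℂ => ‖z‖) '' spectrum ℂ (M.map (Complex.ofReal : ℝ → ℂ)))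

/-- The nonnegative orthant `ℝ₊ⁿ`, the domain of action profiles. -/
def nonnegOrthant (n : ℕ) : Set (Fin n → ℝ) := {x | ∀ i, 0 ≤ x i}

/-- The Jacobian matrix of the utility profile `u` at `a`:
`Jmat u a i j = ∂u_i/∂a_j (a)`. -/
noncomputable def Jmat {n : ℕ} (u : Fin n → (Fin n → ℝ) → ℝ) (a : Fin n → ℝ) :
    Matrix (Fin n) (Fin n) ℝ :=
  Matrix.of fun i j => fderiv ℝ (u i) a (Pi.single j 1)

/-- The benefits matrix `B(a)`: `B_ij = J_ij / (-J_ii)` off the diagonal and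
`B_ii = 0`. -/
noncomputable def Bmat {n : ℕ} (u : Fin n → (Fin n → ℝ) → ℝ) (a : Fin n → ℝ) :
    Matrix (Fin n) (Fin n) ℝ :=
  Matrix.of fun i j => if i = j then 0 else Jmat u a i j / (- Jmat u a i i)

/-- A nonnegative matrix is irreducible when every pair of indices is
connected by some power of the matrix. -/
def MatIrreducible {n : ℕ} (M : Matrix (Fin n) (Fin n) ℝ) : Prop :=
  ∀ i j, ∃ k : ℕ, 1 ≤ k ∧ 0 < (M ^ k) i j

/-- `a` can be Pareto improved upon within the nonnegative orthant. -/
def ParetoImprovable {n : ℕ} (u : Fin n → (Fin n → ℝ) → ℝ) (a : Fin n → ℝ) : Prop :=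
  ∃ a' : Fin n → ℝ, (∀ i, 0 ≤ a' i) ∧ (∀ i, u i a ≤ u i a') ∧ ∃ i, u i a < u i a'

open Filter

lemma clm_apply_eq_sum {n : ℕ} (f : (Fin n → ℝ) →L[ℝ] ℝ) (x : Fin n → ℝ) :
    f x = ∑ i, x i * f (Pi.single i 1) := by
  have hx : x = ∑ i, x i • (Pi.single i (1:ℝ) : Fin n → ℝ) := by
    have h1 : ∀ i : Fin n, x i • (Pi.single i (1:ℝ) : Fin n → ℝ) = Pi.single i (x i) := by
      intro i; ext j; by_cases h : j = i <;> simp [Pi.single_apply, h]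
    simp_rw [h1]
    exact (Finset.univ_sum_single x).symm
  conv_lhs => rw [hx]
  rw [map_sum]
  exact Finset.sum_congr rfl fun i _ => by rw [_root_.map_smul, smul_eq_mul]


lemma no_improving_direction {n : ℕ} (hn : 1 ≤ n) (u : Fin n → (Fin n → ℝ) → ℝ)
    (hdiff : ∀ i, ContDiff ℝ 1 (u i))
    (a : Fin n → ℝ) (ha : ∀ i, 0 < a i) (hpareto : ¬ ParetoImprovable u a) :
    ¬ ∃ d : Fin n → ℝ, ∀ i, 0 < fderiv ℝ (u i) a d := by
  rintro ⟨d, hd⟩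
  have key : ∀ i, ∀ᶠ t in nhdsWithin (0:ℝ) (Set.Ioi 0), u i a < u i (a + t • d) := by
    intro i
    have hF : HasFDerivAt (u i) (fderiv ℝ (u i) a) a :=
      (((hdiff i).differentiable one_ne_zero) a).hasFDerivAt
    have hc : HasDerivAt (fun t : ℝ => a + t • d) d 0 := by
      simpa using ((hasDerivAt_id (0:ℝ)).smul_const d).const_add a
    have hF' : HasFDerivAt (u i) (fderiv ℝ (u i) a) ((fun t : ℝ => a + t • d) 0) := by
      simpa using hF
    have hg : HasDerivAt (fun t : ℝ => u i (a + t • d)) (fderiv ℝ (u i) a d) 0 :=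
      hF'.comp_hasDerivAt 0 hc
    have hslope := hasDerivAt_iff_tendsto_slope.mp hg
    have hpos : ∀ᶠ t in nhdsWithin (0:ℝ) {(0:ℝ)}ᶜ,
        0 < slope (fun t : ℝ => u i (a + t • d)) 0 t :=
      hslope.eventually (eventually_gt_nhds (hd i))
    have hmono : nhdsWithin (0:ℝ) (Set.Ioi 0) ≤ nhdsWithin (0:ℝ) {(0:ℝ)}ᶜ :=
      nhdsWithin_mono 0 (fun x hx => ne_of_gt hx)
    filter_upwards [hpos.filter_mono hmono, self_mem_nhdsWithin] with t ht ht0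
    have hs : slope (fun t : ℝ => u i (a + t • d)) 0 t
        = (u i (a + t • d) - u i a) / t := by
      simp [slope_def_field]
    rw [hs] at ht
    have ht0' : (0:ℝ) < t := ht0
    have h := mul_pos ht ht0'
    rw [div_mul_cancel₀ _ (ne_of_gt ht0')] at h
    linarith
  have key2 : ∀ j, ∀ᶠ t in nhdsWithin (0:ℝ) (Set.Ioi 0), 0 ≤ (a + t • d) j := by
    intro j
    have hc : Continuous (fun t : ℝ => a j + t * d j) := by continuity
    have htend : Tendsto (fun t : ℝ => a j + t * d j) (nhds 0) (nhds (a j)) := by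
      have := hc.tendsto 0; simpa using this
    have hev : ∀ᶠ t in nhds (0:ℝ), 0 < a j + t * d j :=
      htend.eventually (eventually_gt_nhds (ha j))
    have := eventually_nhdsWithin_of_eventually_nhds (s := Set.Ioi (0:ℝ)) hev
    filter_upwards [this] with t ht
    have : (a + t • d) j = a j + t * d j := by simp [smul_eq_mul]
    rw [this]; exact le_of_lt ht
  have hall : ∀ᶠ t in nhdsWithin (0:ℝ) (Set.Ioi 0),
      (∀ i, u i a < u i (a + t • d)) ∧ (∀ j, 0 ≤ (a + t • d) j) :=
    (eventually_all.2 key).and (eventually_all.2 key2)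
  obtain ⟨t, ht1, ht2⟩ := hall.exists
  exact hpareto ⟨a + t • d, ht2, fun i => le_of_lt (ht1 i), ⟨0, hn⟩, ht1 _⟩


lemma gordan {n : ℕ} (J : Matrix (Fin n) (Fin n) ℝ)
    (h : ¬ ∃ d, ∀ i, 0 < J.mulVec d i) :
    ∃ θ : Fin n → ℝ, (∀ i, 0 ≤ θ i) ∧ θ ≠ 0 ∧ ∀ j, ∑ i, θ i * J i j = 0 := by
  classical
  set s : Set (Fin n → ℝ) := Set.univ.pi fun _ => Set.Ioi (0:ℝ) with hs
  have hsopen : IsOpen s := isOpen_set_pi Set.finite_univ (fun _ _ => isOpen_Ioi)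
  have hsconv : Convex ℝ s := convex_pi fun _ _ => convex_Ioi 0
  set T : Submodule ℝ (Fin n → ℝ) := LinearMap.range (Matrix.mulVecLin J) with hT
  have hdisj : Disjoint s (T : Set (Fin n → ℝ)) := by
    rw [Set.disjoint_left]
    rintro x hx ⟨d, rfl⟩
    exact h ⟨d, fun i => hx i (Set.mem_univ i)⟩
  obtain ⟨f, c, hfs, hft⟩ := geometric_hahn_banach_open hsconv hsopen T.convex hdisj
  have hT0 : ∀ y ∈ T, f y = 0 := by
    intro y hy
    by_contra hne
    have hr : ∀ r : ℝ, c ≤ r * f y := by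
      intro r
      have : (r • y) ∈ T := T.smul_mem r hy
      have := hft _ this
      rwa [_root_.map_smul, smul_eq_mul] at this
    have := hr ((c - 1) / f y)
    rw [div_mul_cancel₀ _ hne] at this
    linarith
  have hc0 : c ≤ 0 := by
    have := hft 0 T.zero_mem
    simpa using this
  have hfneg : ∀ x : Fin n → ℝ, (∀ i, 0 ≤ x i) → f x ≤ 0 := by
    intro x hx
    have hev : ∀ᶠ ε in nhdsWithin (0:ℝ) (Set.Ioi 0),
        f x + ε * f (fun _ => 1) ≤ 0 := by
      filter_upwards [self_mem_nhdsWithin] with ε hε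
      have hmem : (x + ε • fun _ => (1:ℝ)) ∈ s := by
        intro i _
        have : (0:ℝ) < ε := hε
        simp only [Pi.add_apply, Pi.smul_apply, smul_eq_mul, mul_one]
        exact Set.mem_Ioi.2 (by have := hx i; linarith)
      have := hfs _ hmem
      rw [map_add, _root_.map_smul, smul_eq_mul] at this
      linarith
    have htend : Tendsto (fun ε : ℝ => f x + ε * f (fun _ => 1))
        (nhdsWithin (0:ℝ) (Set.Ioi 0)) (nhds (f x + 0 * f (fun _ => 1))) := by
      apply Tendsto.mono_left _ nhdsWithin_le_nhds
      exact (tendsto_const_nhds.add ((continuous_id.mul continuous_const).tendsto 0))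
    have := le_of_tendsto htend hev
    simpa using this
  refine ⟨fun i => -f (Pi.single i 1), fun i => ?_, ?_, ?_⟩
  · show (0:ℝ) ≤ -f (Pi.single i 1)
    have : f (Pi.single i 1) ≤ 0 := by
      apply hfneg
      intro j; by_cases h : j = i <;> simp [Pi.single_apply, h]
    linarith
  · intro hzero
    have hfz : ∀ i : Fin n, f (Pi.single i 1) = 0 := by
      intro i
      have := congrFun hzero i
      simpa [neg_eq_zero] using this
    have : f (fun _ => (1:ℝ)) = 0 := by
      rw [clm_apply_eq_sum]
      simp [hfz]
    have hmem : (fun _ => (1:ℝ)) ∈ s := fun i _ => Set.mem_Ioi.2 one_pos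
    have := hfs _ hmem
    linarith
  · intro j
    have hmem : J.mulVec (Pi.single j 1) ∈ T := ⟨Pi.single j 1, rfl⟩
    have hz := hT0 _ hmem
    rw [clm_apply_eq_sum] at hz
    have hcol : ∀ i, J.mulVec (Pi.single j 1) i = J i j := fun i => by
      simp [Matrix.mulVec_single]
    rw [Finset.sum_congr rfl (fun i _ => by rw [hcol i])] at hz
    have : ∑ i, (fun i => -f (Pi.single i 1)) i * J i j
        = - ∑ i, J i j * f (Pi.single i 1) := by
      rw [← Finset.sum_neg_distrib]
      exact Finset.sum_congr rfl fun i _ => by ring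
    rw [this, hz, neg_zero]

lemma pow_nonneg_entries {n : ℕ} {B : Matrix (Fin n) (Fin n) ℝ}
    (hB : ∀ i j, 0 ≤ B i j) (k : ℕ) : ∀ i j, 0 ≤ (B ^ k) i j := by
  induction k with
  | zero =>
    intro i j
    rw [pow_zero, Matrix.one_apply]
    split <;> norm_num
  | succ k ih =>
    intro i j
    rw [pow_succ, Matrix.mul_apply]
    exact Finset.sum_nonneg fun m _ => mul_nonneg (ih i m) (hB m j)

lemma vecMul_pow_fixed {n : ℕ} {B : Matrix (Fin n) (Fin n) ℝ} {φ : Fin n → ℝ}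
    (h : Matrix.vecMul φ B = φ) (k : ℕ) : Matrix.vecMul φ (B ^ k) = φ := by
  induction k with
  | zero => simp
  | succ k ih => rw [pow_succ, ← Matrix.vecMul_vecMul, ih, h]

lemma spec_bound {n : ℕ} (hn : 1 ≤ n) (B : Matrix (Fin n) (Fin n) ℝ)
    (hB : ∀ i j, 0 ≤ B i j) (φ : Fin n → ℝ) (hφ : ∀ i, 0 < φ i)
    (hfix : Matrix.vecMul φ B = φ) :
    sSup ((fun z : ℂ => ‖z‖) ''
      spectrum ℂ (B.map (Complex.ofReal : ℝ → ℂ))) = 1 := by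
  classical
  set M : Matrix (Fin n) (Fin n) ℂ := B.map (Complex.ofReal : ℝ → ℂ) with hM
  -- upper bound for every spectral value
  have hub : ∀ z ∈ spectrum ℂ M, ‖z‖ ≤ 1 := by
    intro z hz
    rw [spectrum.mem_iff] at hz
    have hdet : (algebraMap ℂ (Matrix (Fin n) (Fin n) ℂ) z - M).det = 0 := by
      by_contra hd
      exact hz ((Matrix.isUnit_iff_isUnit_det _).2 (isUnit_iff_ne_zero.2 hd))
    obtain ⟨v, hv0, hv⟩ := (Matrix.exists_mulVec_eq_zero_iff).2 hdet
    have hMv : M.mulVec v = z • v := by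
      rw [Matrix.sub_mulVec, Algebra.algebraMap_eq_smul_one,
        Matrix.smul_mulVec, Matrix.one_mulVec, sub_eq_zero] at hv
      exact hv.symm
    set w : Fin n → ℝ := fun j => ‖v j‖ with hw
    have hwnn : ∀ j, 0 ≤ w j := fun j => norm_nonneg _
    have hrow : ∀ i, ‖z‖ * w i ≤ B.mulVec w i := by
      intro i
      have h1 : (M.mulVec v) i = ∑ j, (B i j : ℂ) * v j := by
        simp [Matrix.mulVec, dotProduct, hM]
      have h2 : ‖(M.mulVec v) i‖ = ‖z‖ * w i := by
        rw [hMv]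
        simp [hw, norm_mul]
      rw [← h2, h1]
      calc ‖∑ j, (B i j : ℂ) * v j‖
          ≤ ∑ j, ‖(B i j : ℂ) * v j‖ := by
            exact norm_sum_le _ _
        _ = ∑ j, B i j * w j := by
            refine Finset.sum_congr rfl fun j _ => ?_
            rw [norm_mul, Complex.norm_real, Real.norm_of_nonneg (hB i j)]
        _ = B.mulVec w i := by simp [Matrix.mulVec, dotProduct]
    -- dot with φ
    have hdot : dotProduct φ (B.mulVec w) = dotProduct φ w := by
      rw [dotProduct_mulVec, hfix]
    have hsum : ‖z‖ * dotProduct φ w ≤ dotProduct φ w := by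
      have : ∑ i, φ i * (‖z‖ * w i) ≤ ∑ i, φ i * B.mulVec w i :=
        Finset.sum_le_sum fun i _ =>
          mul_le_mul_of_nonneg_left (hrow i) (le_of_lt (hφ i))
      calc ‖z‖ * dotProduct φ w
          = ∑ i, φ i * (‖z‖ * w i) := by
            rw [dotProduct, Finset.mul_sum]
            exact Finset.sum_congr rfl fun i _ => by ring
        _ ≤ ∑ i, φ i * B.mulVec w i := this
        _ = dotProduct φ w := by rw [← dotProduct]; exact hdot
    have hpos : 0 < dotProduct φ w := by
      obtain ⟨j, hj⟩ := Function.ne_iff.1 hv0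
      have hwj : 0 < w j := by
        simpa [hw] using (norm_pos_iff.2 hj)
      have : 0 < φ j * w j := mul_pos (hφ j) hwj
      calc (0:ℝ) < φ j * w j := this
        _ ≤ ∑ i, φ i * w i :=
          Finset.single_le_sum
            (fun i _ => mul_nonneg (le_of_lt (hφ i)) (hwnn i))
            (Finset.mem_univ j)
        _ = dotProduct φ w := rfl
    nlinarith [hsum, hpos]
  -- 1 is in the spectrum
  have hmem : (1:ℂ) ∈ spectrum ℂ M := by
    have hdetR : ((1 : Matrix (Fin n) (Fin n) ℝ) - B).det = 0 := by
      rw [← Matrix.det_transpose]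
      apply (Matrix.exists_mulVec_eq_zero_iff).1
      refine ⟨φ, ?_, ?_⟩
      · intro h0
        exact absurd (congrFun h0 ⟨0, hn⟩) (ne_of_gt (hφ ⟨0, hn⟩))
      · rw [Matrix.mulVec_transpose, Matrix.vecMul_sub, Matrix.vecMul_one, hfix,
          sub_self]
    rw [spectrum.mem_iff]
    intro hunit
    rw [Matrix.isUnit_iff_isUnit_det] at hunit
    have heq : algebraMap ℂ (Matrix (Fin n) (Fin n) ℂ) 1 - M
        = ((1 : Matrix (Fin n) (Fin n) ℝ) - B).map (Complex.ofReal : ℝ → ℂ) := by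
      rw [Matrix.map_sub _ (fun a b => by push_cast; ring)]
      congr 1
      rw [_root_.map_one, Matrix.map_one _ Complex.ofReal_zero Complex.ofReal_one]
    rw [heq] at hunit
    have : (((1 : Matrix (Fin n) (Fin n) ℝ) - B).map (Complex.ofReal : ℝ → ℂ)).det
        = Complex.ofReal (((1 : Matrix (Fin n) (Fin n) ℝ) - B).det) := by
      rw [show ((1 : Matrix (Fin n) (Fin n) ℝ) - B).map (Complex.ofReal : ℝ → ℂ)
          = Complex.ofRealHom.mapMatrix ((1 : Matrix (Fin n) (Fin n) ℝ) - B) from rfl]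
      exact (RingHom.map_det Complex.ofRealHom _).symm
    rw [this, hdetR] at hunit
    simpa using hunit
  -- conclude
  have hmem' : (1:ℝ) ∈ (fun z : ℂ => ‖z‖) '' spectrum ℂ M :=
    ⟨1, hmem, by simp⟩
  have hbdd : BddAbove ((fun z : ℂ => ‖z‖) '' spectrum ℂ M) := by
    refine ⟨1, ?_⟩
    rintro x ⟨z, hz, rfl⟩
    exact hub z hz
  exact le_antisymm (csSup_le ⟨1, hmem'⟩ (by rintro x ⟨z, hz, rfl⟩; exact hub z hz))
    (le_csSup hbdd hmem')

/-- If an interior (strictly positive) action profile `a` is Pareto efficient,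
then the spectral radius of the benefits matrix `B(a)` equals `1`. -/
theorem stmt0 {n : ℕ} (hn : 1 ≤ n)
    (u : Fin n → (Fin n → ℝ) → ℝ)
    (hconc : ∀ i, ConcaveOn ℝ (nonnegOrthant n) (u i))
    (hdiff : ∀ i, ContDiff ℝ 1 (u i))
    (hCA : ∀ a ∈ nonnegOrthant n, ∀ i, Jmat u a i i < 0)
    (hPE : ∀ a ∈ nonnegOrthant n, ∀ i j, i ≠ j → 0 ≤ Jmat u a i j)
    (hirr : ∀ a ∈ nonnegOrthant n, MatIrreducible (Bmat u a))
    (a : Fin n → ℝ) (ha : ∀ i, 0 < a i)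
    (hpareto : ¬ ParetoImprovable u a) :
    specRad (Bmat u a) = 1 := by
  classical
  have hanon : a ∈ nonnegOrthant n := fun i => le_of_lt (ha i)
  set J : Matrix (Fin n) (Fin n) ℝ := Jmat u a with hJdef
  -- step 1: no improving direction
  have hnoimp := no_improving_direction hn u hdiff a ha hpareto
  have hJd : ∀ d : Fin n → ℝ, ∀ i, J.mulVec d i = fderiv ℝ (u i) a d := by
    intro d i
    have h1 : J.mulVec d i = ∑ j, J i j * d j := by
      simp [Matrix.mulVec, dotProduct]
    rw [h1, clm_apply_eq_sum (fderiv ℝ (u i) a) d]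
    refine Finset.sum_congr rfl fun j _ => ?_
    rw [mul_comm]
    rfl
  have hnod : ¬ ∃ d, ∀ i, 0 < J.mulVec d i := by
    rintro ⟨d, hd⟩
    exact hnoimp ⟨d, fun i => by rw [← hJd d i]; exact hd i⟩
  -- step 2: Gordan multipliers
  obtain ⟨θ, hθnn, hθne, hθJ⟩ := gordan J hnod
  -- step 3: eigenvector φ
  set φ : Fin n → ℝ := fun i => θ i * (-J i i) with hφdef
  have hnegJ : ∀ i, 0 < -J i i := fun i => neg_pos.2 (hCA a hanon i)
  have hφnn : ∀ i, 0 ≤ φ i := fun i => mul_nonneg (hθnn i) (le_of_lt (hnegJ i))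
  have hφfix : Matrix.vecMul φ (Bmat u a) = φ := by
    funext j
    have h0 : Matrix.vecMul φ (Bmat u a) j = ∑ i, φ i * Bmat u a i j := by
      simp [Matrix.vecMul, dotProduct]
    have hterm : ∀ i, φ i * Bmat u a i j
        = if i = j then 0 else θ i * J i j := by
      intro i
      by_cases h : i = j
      · simp [Bmat, h]
      · have hne : -J i i ≠ 0 := ne_of_gt (hnegJ i)
        have hne' : J i i ≠ 0 := by intro hh; rw [hh, neg_zero] at hne; exact hne rfl
        simp only [Bmat, Matrix.of_apply, if_neg h, hφdef]
        rw [← hJdef]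
        field_simp
    rw [h0, Finset.sum_congr rfl fun i _ => hterm i]
    rw [← Finset.sum_erase Finset.univ (f := fun i => if i = j then 0 else θ i * J i j)
      (a := j) (by simp)]
    have h2 : ∑ i ∈ Finset.univ.erase j, (if i = j then 0 else θ i * J i j)
        = ∑ i ∈ Finset.univ.erase j, θ i * J i j := by
      refine Finset.sum_congr rfl fun i hi => ?_
      rw [if_neg (Finset.mem_erase.1 hi).1]
    rw [h2, Finset.sum_erase_eq_sub (Finset.mem_univ j), hθJ j]
    simp [hφdef]
  -- step 4: positivity of φ via irreducibility
  have hBnn : ∀ i j, 0 ≤ Bmat u a i j := by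
    intro i j
    by_cases h : i = j
    · simp [Bmat, h]
    · show (0:ℝ) ≤ if i = j then 0 else Jmat u a i j / (- Jmat u a i i)
      rw [if_neg h]
      exact div_nonneg (hPE a hanon i j h) (le_of_lt (hnegJ i))
  obtain ⟨i0, hi0⟩ := Function.ne_iff.1 hθne
  have hθi0 : 0 < θ i0 := lt_of_le_of_ne (hθnn i0) (Ne.symm hi0)
  have hφi0 : 0 < φ i0 := mul_pos hθi0 (hnegJ i0)
  have hφpos : ∀ j, 0 < φ j := by
    intro j
    obtain ⟨k, hk1, hkpos⟩ := hirr a hanon i0 j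
    have hfixk := congrFun (vecMul_pow_fixed hφfix k) j
    have h0 : Matrix.vecMul φ (Bmat u a ^ k) j = ∑ m, φ m * (Bmat u a ^ k) m j := by
      simp [Matrix.vecMul, dotProduct]
    rw [h0] at hfixk
    rw [← hfixk]
    calc (0:ℝ) < φ i0 * (Bmat u a ^ k) i0 j := mul_pos hφi0 hkpos
      _ ≤ ∑ m, φ m * (Bmat u a ^ k) m j :=
        Finset.single_le_sum
          (fun m _ => mul_nonneg (hφnn m) (pow_nonneg_entries hBnn k m j))
          (Finset.mem_univ i0)
  -- step 5: spectral radius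
  exact spec_bound hn (Bmat u a) hBnn φ hφpos hφfix
end

section
/- The zero action profile 0 ∈ ℝ₊ⁿ is Pareto efficient if and only if the spectral radius of the benefits matrix B(0) is at most 1. -/
open Matrix Filter Topology
open scoped ENNReal NNReal

namespace PFhelp

variable {n : ℕ}
lemma exists_eigenvector {M : Matrix (Fin n) (Fin n) ℂ} {μ : ℂ} (h : μ ∈ spectrum ℂ M) :
    ∃ v, v ≠ 0 ∧ M.mulVec v = μ • v := by
  rw [← AlgEquiv.spectrum_eq (Matrix.toLinAlgEquiv' : Matrix (Fin n) (Fin n) ℂ ≃ₐ[ℂ] _),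
    ← Module.End.hasEigenvalue_iff_mem_spectrum] at h
  obtain ⟨v, hv⟩ := h.exists_hasEigenvector
  refine ⟨v, hv.2, ?_⟩
  simpa [Matrix.toLinAlgEquiv'_apply] using hv.apply_eq_smul

lemma abs_le_specRad (M : Matrix (Fin n) (Fin n) ℝ) {ν : ℂ}
    (hν : ν ∈ spectrum ℂ (M.map (Complex.ofReal : ℝ → ℂ))) : ‖ν‖ ≤ specRad M :=
  le_csSup (((Matrix.finite_spectrum _).image _).bddAbove) ⟨ν, hν, rfl⟩

lemma specRad_exists_max (hn : 1 ≤ n) (M : Matrix (Fin n) (Fin n) ℝ) :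
    ∃ μ ∈ spectrum ℂ (M.map (Complex.ofReal : ℝ → ℂ)), ‖μ‖ = specRad M := by
  have hne : (spectrum ℂ (M.map (Complex.ofReal : ℝ → ℂ))).Nonempty := by
    have : Nonempty (Fin n) := ⟨⟨0, hn⟩⟩
    exact spectrum.nonempty_of_isAlgClosed_of_finiteDimensional ℂ _
  have hmem : specRad M ∈ (fun z : ℂ => ‖z‖) ''
      spectrum ℂ (M.map (Complex.ofReal : ℝ → ℂ)) :=
    (hne.image _).csSup_mem ((Matrix.finite_spectrum _).image _)
  obtain ⟨μ, hμ, hμe⟩ := hmem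
  exact ⟨μ, hμ, hμe⟩

lemma pow_entry_nonneg {M : Matrix (Fin n) (Fin n) ℝ} (hM : ∀ i j, 0 ≤ M i j) :
    ∀ (k : ℕ) (i j : Fin n), 0 ≤ (M ^ k) i j := by
  intro k
  induction k with
  | zero => intro i j; rw [pow_zero]; rw [Matrix.one_apply]; positivity
  | succ k ih =>
    intro i j
    rw [pow_succ, Matrix.mul_apply]
    exact Finset.sum_nonneg fun l _ => mul_nonneg (ih i l) (hM l j)

section Gelfand
attribute [local instance] Matrix.linftyOpNormedRing Matrix.linftyOpNormedAlgebra

lemma row_sum_le_norm (M : Matrix (Fin n) (Fin n) ℂ) (i : Fin n) :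
    (∑ j, ‖M i j‖) ≤ ‖M‖ := by
  rw [Matrix.linfty_opNorm_def]
  have h : (fun i => ∑ j, ‖M i j‖₊) i ≤ (Finset.univ : Finset (Fin n)).sup fun i => ∑ j, ‖M i j‖₊ :=
    Finset.le_sup (f := fun i => ∑ j, ‖M i j‖₊) (Finset.mem_univ i)
  calc (∑ j, ‖M i j‖) = ((∑ j, ‖M i j‖₊ : NNReal) : ℝ) := by
        push_cast
        refine Finset.sum_congr rfl fun j _ => ?_
        simp
    _ ≤ _ := NNReal.coe_le_coe.mpr h

lemma le_specRad_of_subinvariant {M : Matrix (Fin n) (Fin n) ℝ}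
    (hM : ∀ i j, 0 ≤ M i j) {x : Fin n → ℝ} (hx : ∀ i, 0 ≤ x i)
    {i0 : Fin n} (hx0 : 0 < x i0) {ρ : ℝ} (hρ : 0 ≤ ρ)
    (hsub : ∀ i, ρ * x i ≤ M.mulVec x i) : ρ ≤ specRad M := by
  set M' : Matrix (Fin n) (Fin n) ℂ := M.map (Complex.ofReal : ℝ → ℂ) with hM'
  -- step 1: iterated subinvariance
  have hpow : ∀ (k : ℕ) (i : Fin n), ρ ^ k * x i ≤ (M ^ k).mulVec x i := by
    intro k
    induction k with
    | zero => intro i; simp [Matrix.mulVec, dotProduct, Matrix.one_apply]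
    | succ k ih =>
      intro i
      have h1 : (M ^ (k + 1)).mulVec x i = M.mulVec ((M ^ k).mulVec x) i := by
        rw [pow_succ', ← Matrix.mulVec_mulVec]
      rw [h1]
      have h2 : ρ ^ k * (M.mulVec x i) ≤ M.mulVec ((M ^ k).mulVec x) i := by
        have e1 : M.mulVec ((M ^ k).mulVec x) i = ∑ j, M i j * ((M ^ k).mulVec x) j := by
          simp [Matrix.mulVec, dotProduct]
        have e2 : ρ ^ k * (M.mulVec x i) = ∑ j, M i j * (ρ ^ k * x j) := by
          simp only [Matrix.mulVec, dotProduct, Finset.mul_sum]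
          exact Finset.sum_congr rfl fun j _ => by ring
        rw [e1, e2]
        exact Finset.sum_le_sum fun j _ => mul_le_mul_of_nonneg_left (ih j) (hM i j)
      calc ρ ^ (k + 1) * x i = ρ ^ k * (ρ * x i) := by ring
        _ ≤ ρ ^ k * (M.mulVec x i) := by
            exact mul_le_mul_of_nonneg_left (hsub i) (pow_nonneg hρ k)
        _ ≤ _ := h2
  -- step 2: norm lower bound
  set X : ℝ := ∑ j, x j with hX
  have hXpos : 0 < X := by
    refine lt_of_lt_of_le hx0 ?_
    exact Finset.single_le_sum (fun j _ => hx j) (Finset.mem_univ i0)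
  set c : ℝ := x i0 / X with hc
  have hcpos : 0 < c := div_pos hx0 hXpos
  have hnorm : ∀ k : ℕ, c * ρ ^ k ≤ ‖M' ^ k‖ := by
    intro k
    have hmk : M' ^ k = (M ^ k).map (Complex.ofReal : ℝ → ℂ) := by
      have := map_pow (Complex.ofRealHom.mapMatrix :
        Matrix (Fin n) (Fin n) ℝ →+* Matrix (Fin n) (Fin n) ℂ) M k
      exact this.symm
    have h1 : (M ^ k).mulVec x i0 ≤ X * ‖M' ^ k‖ := by
      have hxle : ∀ j, x j ≤ X := fun j =>
        Finset.single_le_sum (fun l _ => hx l) (Finset.mem_univ j)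
      have h2 : (M ^ k).mulVec x i0 ≤ ∑ j, (M ^ k) i0 j * X := by
        simp only [Matrix.mulVec, dotProduct]
        refine Finset.sum_le_sum fun j _ => ?_
        exact mul_le_mul_of_nonneg_left (hxle j) (pow_entry_nonneg hM k i0 j)
      have h3 : ∑ j, (M ^ k) i0 j * X = (∑ j, (M ^ k) i0 j) * X := by
        rw [Finset.sum_mul]
      have h4 : (∑ j, (M ^ k) i0 j) ≤ ‖M' ^ k‖ := by
        have h5 := row_sum_le_norm (M' ^ k) i0
        have h6 : (∑ j, ‖(M' ^ k) i0 j‖) = ∑ j, (M ^ k) i0 j := by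
          refine Finset.sum_congr rfl fun j _ => ?_
          rw [hmk]
          simp [Matrix.map_apply, Complex.norm_real, Real.norm_eq_abs, abs_of_nonneg (pow_entry_nonneg hM k i0 j)]
        rw [← h6]; exact h5
      calc (M ^ k).mulVec x i0 ≤ (∑ j, (M ^ k) i0 j) * X := by rw [← h3]; exact h2
        _ ≤ ‖M' ^ k‖ * X := mul_le_mul_of_nonneg_right h4 hXpos.le
        _ = X * ‖M' ^ k‖ := by ring
    have h7 : ρ ^ k * x i0 ≤ X * ‖M' ^ k‖ := le_trans (hpow k i0) h1
    rw [hc, div_mul_eq_mul_div, div_le_iff₀ hXpos]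
    calc x i0 * ρ ^ k = ρ ^ k * x i0 := by ring
      _ ≤ X * ‖M' ^ k‖ := h7
      _ = ‖M' ^ k‖ * X := by ring
  -- step 3: Gelfand
  have hG := spectrum.pow_norm_pow_one_div_tendsto_nhds_spectralRadius M'
  have hb : Tendsto (fun k : ℕ => ENNReal.ofReal (c ^ (1/(k:ℝ)) * ρ)) atTop
      (𝓝 (ENNReal.ofReal ρ)) := by
    have h1 : Tendsto (fun k : ℕ => (1/(k:ℝ))) atTop (𝓝 0) := tendsto_one_div_atTop_nhds_zero_nat
    have h2 : ContinuousAt (fun t : ℝ => c ^ t) 0 := Real.continuousAt_const_rpow (ne_of_gt hcpos)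
    have h3 : Tendsto (fun k : ℕ => c ^ (1/(k:ℝ))) atTop (𝓝 1) := by
      have := h2.tendsto.comp h1
      simpa [Real.rpow_zero, Function.comp_def] using this
    have h4 : Tendsto (fun k : ℕ => c ^ (1/(k:ℝ)) * ρ) atTop (𝓝 ρ) := by
      simpa using h3.mul_const ρ
    exact (ENNReal.continuous_ofReal.tendsto ρ).comp h4
  have hle : ∀ᶠ k : ℕ in atTop,
      ENNReal.ofReal (c ^ (1/(k:ℝ)) * ρ) ≤ ENNReal.ofReal (‖M' ^ k‖ ^ (1/(k:ℝ))) := by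
    filter_upwards [eventually_ge_atTop 1] with k hk
    apply ENNReal.ofReal_le_ofReal
    have hk0 : (0:ℝ) < k := by exact_mod_cast hk
    have e : c ^ (1/(k:ℝ)) * ρ = (c * ρ ^ k) ^ (1/(k:ℝ)) := by
      rw [Real.mul_rpow hcpos.le (pow_nonneg hρ k), ← Real.rpow_natCast ρ k,
        ← Real.rpow_mul hρ, mul_one_div, div_self (ne_of_gt hk0), Real.rpow_one]
    rw [e]
    exact Real.rpow_le_rpow (by positivity) (hnorm k) (by positivity)
  have hfin : ENNReal.ofReal ρ ≤ spectralRadius ℂ M' := le_of_tendsto_of_tendsto hb hG hle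
  have hsup : spectralRadius ℂ M' ≤ ENNReal.ofReal (specRad M) := by
    have hdef : spectralRadius ℂ M' = ⨆ μ ∈ spectrum ℂ M', (‖μ‖₊ : ℝ≥0∞) := rfl
    rw [hdef]
    refine iSup₂_le fun μ hμ => ?_
    have h1 : ‖μ‖ ≤ specRad M := abs_le_specRad M hμ
    have h2 : ((‖μ‖₊ : ℝ≥0∞)) = ENNReal.ofReal ‖μ‖ := (ofReal_norm μ).symm
    rw [h2]
    exact ENNReal.ofReal_le_ofReal (by simpa using h1)
  have hspecnn : 0 ≤ specRad M := by
    have hn : 1 ≤ n := i0.pos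
    obtain ⟨μ, hμ, habs⟩ := specRad_exists_max hn M
    rw [← habs]; exact norm_nonneg μ
  exact (ENNReal.ofReal_le_ofReal_iff hspecnn).mp (le_trans hfin hsup)
end Gelfand


lemma exists_subsolution (hn : 1 ≤ n) {M : Matrix (Fin n) (Fin n) ℝ}
    (hM : ∀ i j, 0 ≤ M i j) (hr : 1 < specRad M) :
    ∃ x : Fin n → ℝ, (∀ i, 0 ≤ x i) ∧ (∀ i, x i ≤ M.mulVec x i) ∧
      ∃ i, x i < M.mulVec x i := by
  obtain ⟨μ, hμmem, hμabs⟩ := specRad_exists_max hn M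
  obtain ⟨v, hv0, hEig⟩ := exists_eigenvector hμmem
  refine ⟨fun i => ‖v i‖, fun i => norm_nonneg _, ?_, ?_⟩
  all_goals {
    have key : ∀ i, ‖μ‖ * ‖v i‖ ≤ M.mulVec (fun j => ‖v j‖) i := by
      intro i
      have h1 : μ * v i = ∑ j, (M i j : ℂ) * v j := by
        have := congrFun hEig i
        simp only [Matrix.mulVec, dotProduct, Pi.smul_apply, smul_eq_mul] at this
        rw [← this]
        simp [Matrix.map_apply]
      calc ‖μ‖ * ‖v i‖ = ‖μ * v i‖ := (norm_mul _ _).symm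
        _ = ‖∑ j, (M i j : ℂ) * v j‖ := by rw [h1]
        _ ≤ ∑ j, ‖(M i j : ℂ) * v j‖ :=
            norm_sum_le Finset.univ (fun j => (M i j : ℂ) * v j)
        _ = ∑ j, M i j * ‖v j‖ := by
            refine Finset.sum_congr rfl fun j _ => ?_
            rw [norm_mul, Complex.norm_real, Real.norm_eq_abs, abs_of_nonneg (hM i j)]
        _ = M.mulVec (fun j => ‖v j‖) i := by
            simp [Matrix.mulVec, dotProduct]
    have hone : 1 < ‖μ‖ := hμabs ▸ hr
    first
    | exact fun i => le_trans (by nlinarith [norm_nonneg (v i)]) (key i)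
    | { obtain ⟨i, hi⟩ : ∃ i, v i ≠ 0 := by
          by_contra hc; push_neg at hc; exact hv0 (funext fun i => hc i)
        have hvipos : 0 < ‖v i‖ := by
          simpa [norm_pos_iff] using hi
        exact ⟨i, lt_of_lt_of_le (by nlinarith) (key i)⟩ }
  }

/-- Walks: a positive entry of a power connecting the complement of `T` to `T`
yields a direct positive edge from outside `T` into `T`. -/
lemma exists_edge {M : Matrix (Fin n) (Fin n) ℝ} (hM : ∀ i j, 0 ≤ M i j)
    (hMp : ∀ (k : ℕ) (i j : Fin n), 0 ≤ (M ^ k) i j)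
    (T : Set (Fin n)) : ∀ (k : ℕ) (i j : Fin n), 0 < (M ^ k) i j → j ∈ T → i ∉ T →
      ∃ p, p ∉ T ∧ ∃ q, q ∈ T ∧ 0 < M p q := by
  intro k
  induction k with
  | zero =>
    intro i j h hj hi
    rw [pow_zero, Matrix.one_apply] at h
    split at h
    · exact absurd (‹i = j› ▸ hj) hi
    · exact absurd h (lt_irrefl 0)
  | succ k ih =>
    intro i j h hj hi
    rw [pow_succ', Matrix.mul_apply] at h
    have hex : ∃ l, 0 < M i l * (M ^ k) l j := by
      by_contra hc
      push_neg at hc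
      exact absurd (Finset.sum_nonpos fun l _ => hc l) (not_le.mpr h)
    obtain ⟨l, hl⟩ := hex
    have h1 : 0 < M i l := by
      rcases mul_pos_iff.mp hl with ⟨h1, _⟩ | ⟨h1, _⟩
      · exact h1
      · exact absurd h1 (not_lt.mpr (hM i l))
    have h2 : 0 < (M ^ k) l j := by
      rcases mul_pos_iff.mp hl with ⟨_, h2⟩ | ⟨_, h2⟩
      · exact h2
      · exact absurd h2 (not_lt.mpr (hMp k l j))
    by_cases hlT : l ∈ T
    · exact ⟨i, hi, l, hlT, h1⟩
    · exact ih l j h2 hj hlT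



open Classical in
/-- Bootstrap: a subsolution with one strict coordinate can be upgraded to an
everywhere-strict subsolution, for an irreducible nonnegative matrix. -/
lemma bootstrap {M : Matrix (Fin n) (Fin n) ℝ} (hM : ∀ i j, 0 ≤ M i j)
    (hirr : MatIrreducible M) {x : Fin n → ℝ} (hx : ∀ i, 0 ≤ x i)
    (hle : ∀ i, x i ≤ M.mulVec x i) (hst : ∃ i, x i < M.mulVec x i) :
    ∃ y : Fin n → ℝ, (∀ i, 0 ≤ y i) ∧ ∀ i, y i < M.mulVec y i := by
  classical
  suffices h : ∀ (m : ℕ) (x : Fin n → ℝ), (∀ i, 0 ≤ x i) → (∀ i, x i ≤ M.mulVec x i) →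
      (∃ i, x i < M.mulVec x i) →
      ((Finset.univ.filter fun i => ¬ x i < M.mulVec x i).card ≤ m) →
      ∃ y : Fin n → ℝ, (∀ i, 0 ≤ y i) ∧ ∀ i, y i < M.mulVec y i by
    exact h _ x hx hle hst le_rfl
  intro m
  induction m with
  | zero =>
    intro x hx hle hst hcard
    refine ⟨x, hx, fun i => ?_⟩
    by_contra hcon
    have hmem : i ∈ Finset.univ.filter fun i => ¬ x i < M.mulVec x i :=
      Finset.mem_filter.mpr ⟨Finset.mem_univ i, hcon⟩
    have := Finset.card_eq_zero.mp (Nat.le_zero.mp hcard)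
    rw [this] at hmem
    exact absurd hmem (Finset.notMem_empty i)
  | succ m ih =>
    intro x hx hle hst hcard
    set S := Finset.univ.filter fun i => ¬ x i < M.mulVec x i with hS
    by_cases hSe : S = ∅
    · refine ⟨x, hx, fun i => ?_⟩
      by_contra hcon
      have hmem : i ∈ S := Finset.mem_filter.mpr ⟨Finset.mem_univ i, hcon⟩
      rw [hSe] at hmem
      exact absurd hmem (Finset.notMem_empty i)
    · obtain ⟨p, hp⟩ := Finset.nonempty_iff_ne_empty.mpr hSe
      have hpns : ¬ x p < M.mulVec x p := (Finset.mem_filter.mp hp).2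
      obtain ⟨i0, hi0⟩ := hst
      obtain ⟨k, _, hkpos⟩ := hirr p i0
      obtain ⟨P, hP, q, hq, hPq⟩ := exists_edge hM (pow_entry_nonneg hM)
        {i | x i < M.mulVec x i} k p i0 hkpos hi0 hpns
      -- hq : x q < M.mulVec x q ; hP : ¬ x P < M.mulVec x P ; hPq : 0 < M P q
      set ε : ℝ := (M.mulVec x q - x q) / 2 with hε
      have hgap : 0 < M.mulVec x q - x q := sub_pos.mpr hq
      have hεpos : 0 < ε := by positivity
      have hεlt : ε < M.mulVec x q - x q := by rw [hε]; linarith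
      set x' : Fin n → ℝ := fun i => x i + ε * (if i = q then 1 else 0) with hx'
      have hmv : ∀ i, M.mulVec x' i = M.mulVec x i + ε * M i q := by
        intro i
        simp only [hx', Matrix.mulVec, dotProduct]
        have e : ∀ j : Fin n, j ∈ Finset.univ →
            M i j * (x j + ε * (if j = q then 1 else 0)) =
              M i j * x j + (if j = q then ε * M i q else 0) := by
          intro j _
          by_cases hj : j = q
          · subst hj; simp; ring
          · simp [hj]
        rw [Finset.sum_congr rfl e, Finset.sum_add_distrib, Finset.sum_ite_eq']
        simp
      have hx'nn : ∀ i, 0 ≤ x' i := by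
        intro i
        have : (0:ℝ) ≤ ε * (if i = q then 1 else 0) := by positivity
        exact add_nonneg (hx i) this
      have hPq' : P ≠ q := fun h => hP (h ▸ hq)
      have hle' : ∀ i, x' i ≤ M.mulVec x' i := by
        intro i
        rw [hmv i]
        by_cases hiq : i = q
        · subst hiq
          simp only [hx', eq_self_iff_true, if_true, mul_one]
          have h1 : x i + ε < M.mulVec x i := by linarith
          have h2 : (0:ℝ) ≤ ε * M i i := mul_nonneg hεpos.le (hM i i)
          linarith
        · simp only [hx', if_neg hiq, mul_zero, add_zero]
          have h2 : (0:ℝ) ≤ ε * M i q := mul_nonneg hεpos.le (hM i q)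
          linarith [hle i]
      have hsubset : ∀ i, x i < M.mulVec x i → x' i < M.mulVec x' i := by
        intro i hi
        rw [hmv i]
        by_cases hiq : i = q
        · subst hiq
          simp only [hx', eq_self_iff_true, if_true, mul_one]
          have h2 : (0:ℝ) ≤ ε * M i i := mul_nonneg hεpos.le (hM i i)
          linarith
        · simp only [hx', if_neg hiq, mul_zero, add_zero]
          have h2 : (0:ℝ) ≤ ε * M i q := mul_nonneg hεpos.le (hM i q)
          linarith
      have hP' : x' P < M.mulVec x' P := by
        rw [hmv P]
        simp only [hx', if_neg hPq', mul_zero, add_zero]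
        have h2 : (0:ℝ) < ε * M P q := mul_pos hεpos hPq
        have := hle P
        linarith
      have hcard' : (Finset.univ.filter fun i => ¬ x' i < M.mulVec x' i).card ≤ m := by
        have hsub : (Finset.univ.filter fun i => ¬ x' i < M.mulVec x' i) ⊆ S.erase P := by
          intro i hi
          have hi2 : ¬ x' i < M.mulVec x' i := (Finset.mem_filter.mp hi).2
          refine Finset.mem_erase.mpr ⟨?_, ?_⟩
          · rintro rfl; exact hi2 hP'
          · refine Finset.mem_filter.mpr ⟨Finset.mem_univ i, fun hc => hi2 (hsubset i hc)⟩
        have hPS : P ∈ S := Finset.mem_filter.mpr ⟨Finset.mem_univ P, hP⟩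
        calc (Finset.univ.filter fun i => ¬ x' i < M.mulVec x' i).card
            ≤ (S.erase P).card := Finset.card_le_card hsub
          _ = S.card - 1 := Finset.card_erase_of_mem hPS
          _ ≤ m := by omega
      exact ih x' hx'nn hle' ⟨P, hP'⟩ hcard'


lemma hasDerivAt_comp_smul (f : (Fin n → ℝ) → ℝ) (hf : ContDiff ℝ 1 f) (x : Fin n → ℝ) :
    HasDerivAt (fun t : ℝ => f (t • x)) (fderiv ℝ f 0 x) 0 := by
  have hdf : HasFDerivAt f (fderiv ℝ f 0) ((0:ℝ) • x) := by
    rw [zero_smul]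
    exact (hf.differentiable one_ne_zero 0).hasFDerivAt
  have hsm : HasDerivAt (fun t : ℝ => t • x) x 0 := by
    simpa using (hasDerivAt_id (0:ℝ)).smul_const x
  exact hdf.comp_hasDerivAt 0 hsm

/-- Gradient inequality for concave functions on the orthant, at the origin. -/
lemma concave_grad_ineq (f : (Fin n → ℝ) → ℝ) (hf : ContDiff ℝ 1 f)
    (hc : ConcaveOn ℝ (nonnegOrthant n) f) {x : Fin n → ℝ} (hx : x ∈ nonnegOrthant n) :
    f x - f 0 ≤ fderiv ℝ f 0 x := by
  have hφ := hasDerivAt_comp_smul f hf x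
  have hslope : Tendsto (slope (fun t : ℝ => f (t • x)) 0) (𝓝[>] 0) (𝓝 (fderiv ℝ f 0 x)) :=
    (hasDerivAt_iff_tendsto_slope.mp hφ).mono_left
      (nhdsWithin_mono _ (fun t ht => by simpa using ne_of_gt ht))
  refine ge_of_tendsto hslope ?_
  filter_upwards [Ioo_mem_nhdsGT_of_mem (Set.mem_Ico.mpr ⟨le_rfl, one_pos⟩)] with t ht
  have h0 : (0 : Fin n → ℝ) ∈ nonnegOrthant n := fun i => le_rfl
  have hcc := hc.2 h0 hx (by linarith [ht.2] : (0:ℝ) ≤ 1 - t) ht.1.le (by ring)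
  rw [smul_zero, zero_add] at hcc
  have ht0 : (0:ℝ) < t := ht.1
  rw [slope_def_field, zero_smul, sub_zero, le_div_iff₀ ht0]
  simp only [smul_eq_mul] at hcc
  nlinarith [hcc]

/-- Positive directional derivatives in a common nonnegative direction imply
Pareto improvability of the origin. -/
lemma improvable_of_pos_deriv (hn : 1 ≤ n) (u : Fin n → (Fin n → ℝ) → ℝ)
    (hdiff : ∀ i, ContDiff ℝ 1 (u i)) {v : Fin n → ℝ} (hv : ∀ i, 0 ≤ v i)
    (hd : ∀ i, 0 < fderiv ℝ (u i) 0 v) : ParetoImprovable u 0 := by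
  have hev : ∀ᶠ t : ℝ in 𝓝[>] 0, ∀ i, u i 0 < u i (t • v) := by
    rw [eventually_all]
    intro i
    have hφ := hasDerivAt_comp_smul (u i) (hdiff i) v
    have hslope : Tendsto (slope (fun t : ℝ => u i (t • v)) 0) (𝓝[>] 0)
        (𝓝 (fderiv ℝ (u i) 0 v)) :=
      (hasDerivAt_iff_tendsto_slope.mp hφ).mono_left
        (nhdsWithin_mono _ (fun t ht => by simpa using ne_of_gt ht))
    have hpos := hslope.eventually (eventually_gt_nhds (hd i))
    filter_upwards [hpos, self_mem_nhdsWithin] with t hslopePos ht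
    have ht0 : (0:ℝ) < t := ht
    rw [slope_def_field] at hslopePos
    have : 0 < (u i (t • v) - u i ((0:ℝ) • v)) / (t - 0) := hslopePos
    rw [sub_zero] at this
    have h2 : 0 < u i (t • v) - u i ((0:ℝ) • v) := by
      by_contra hcon
      push_neg at hcon
      nlinarith [div_nonpos_of_nonpos_of_nonneg hcon ht0.le]
    simpa using h2
  obtain ⟨t, ht, himp⟩ := (hev.and self_mem_nhdsWithin).exists
  refine ⟨t • v, fun i => mul_nonneg (le_of_lt himp) (hv i), fun i => (ht i).le, ?_⟩
  exact ⟨⟨0, hn⟩, ht ⟨0, hn⟩⟩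

lemma fderiv_eq_mulVec (u : Fin n → (Fin n → ℝ) → ℝ) (i : Fin n) (v : Fin n → ℝ) :
    fderiv ℝ (u i) 0 v = (Jmat u 0).mulVec v i := by
  have hv : v = ∑ j, v j • (Pi.single j 1 : Fin n → ℝ) := by
    ext l
    rw [Finset.sum_apply]
    simp [Pi.single_apply]
  conv_lhs => rw [hv]
  rw [map_sum]
  simp only [_root_.map_smul, smul_eq_mul]
  simp [Jmat, Matrix.mulVec, dotProduct, mul_comm]

lemma Bmat_mulVec_eq (u : Fin n → (Fin n → ℝ) → ℝ) (x : Fin n → ℝ) (i : Fin n) :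
    (Bmat u 0).mulVec x i =
      ((Jmat u 0).mulVec x i - Jmat u 0 i i * x i) / (- Jmat u 0 i i) := by
  simp only [Bmat, Matrix.mulVec, dotProduct, Matrix.of_apply]
  have e : ∀ j ∈ (Finset.univ : Finset (Fin n)),
      (if i = j then 0 else Jmat u 0 i j / (- Jmat u 0 i i)) * x j
      = (Jmat u 0 i j * x j) / (- Jmat u 0 i i) -
        (if i = j then (Jmat u 0 i j * x j) / (- Jmat u 0 i i) else 0) := by
    intro j _
    by_cases hj : i = j
    · simp [hj]
    · simp only [if_neg hj, sub_zero]
      ring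
  rw [Finset.sum_congr rfl e, Finset.sum_sub_distrib, Finset.sum_ite_eq]
  simp only [Finset.mem_univ, if_true]
  rw [sub_div, Finset.sum_div]

lemma le_B_iff (u : Fin n → (Fin n → ℝ) → ℝ) (hCA0 : ∀ i, Jmat u 0 i i < 0)
    (x : Fin n → ℝ) (i : Fin n) :
    x i ≤ (Bmat u 0).mulVec x i ↔ 0 ≤ (Jmat u 0).mulVec x i := by
  rw [Bmat_mulVec_eq]
  have hc : 0 < - Jmat u 0 i i := neg_pos.mpr (hCA0 i)
  rw [le_div_iff₀ hc]
  constructor <;> intro h <;> nlinarith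

lemma lt_B_iff (u : Fin n → (Fin n → ℝ) → ℝ) (hCA0 : ∀ i, Jmat u 0 i i < 0)
    (x : Fin n → ℝ) (i : Fin n) :
    x i < (Bmat u 0).mulVec x i ↔ 0 < (Jmat u 0).mulVec x i := by
  rw [Bmat_mulVec_eq]
  have hc : 0 < - Jmat u 0 i i := neg_pos.mpr (hCA0 i)
  rw [lt_div_iff₀ hc]
  constructor <;> intro h <;> nlinarith


end PFhelp

/-- The zero action profile is Pareto efficient iff the spectral radius of the
benefits matrix at `0` is at most `1`. -/
theorem stmt2 {n : ℕ} (hn : 1 ≤ n)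
    (u : Fin n → (Fin n → ℝ) → ℝ)
    (hconc : ∀ i, ConcaveOn ℝ (nonnegOrthant n) (u i))
    (hdiff : ∀ i, ContDiff ℝ 1 (u i))
    (hCA : ∀ a ∈ nonnegOrthant n, ∀ i, Jmat u a i i < 0)
    (hPE : ∀ a ∈ nonnegOrthant n, ∀ i j, i ≠ j → 0 ≤ Jmat u a i j)
    (hirr : ∀ a ∈ nonnegOrthant n, MatIrreducible (Bmat u a)) :
    ¬ ParetoImprovable u (0 : Fin n → ℝ) ↔ specRad (Bmat u (0 : Fin n → ℝ)) ≤ 1 := by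
  have h0mem : (0 : Fin n → ℝ) ∈ nonnegOrthant n := fun i => le_rfl
  have hCA0 : ∀ i, Jmat u 0 i i < 0 := hCA 0 h0mem
  have hB0nn : ∀ i j, 0 ≤ Bmat u 0 i j := by
    intro i j
    by_cases hij : i = j
    · simp [Bmat, hij]
    · simp only [Bmat, Matrix.of_apply, if_neg hij]
      exact div_nonneg (hPE 0 h0mem i j hij) (neg_pos.mpr (hCA0 i)).le
  constructor
  · intro hni
    by_contra hgt
    push_neg at hgt
    obtain ⟨x, hx, hxle, hxst⟩ := PFhelp.exists_subsolution hn hB0nn hgt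
    obtain ⟨y, hy, hyst⟩ := PFhelp.bootstrap hB0nn (hirr 0 h0mem) hx hxle hxst
    apply hni
    apply PFhelp.improvable_of_pos_deriv hn u hdiff hy
    intro i
    rw [PFhelp.fderiv_eq_mulVec]
    exact (PFhelp.lt_B_iff u hCA0 y i).mp (hyst i)
  · intro hler hi
    obtain ⟨a', ha'nn, ha'le, i1, ha'st⟩ := hi
    have ha'mem : a' ∈ nonnegOrthant n := ha'nn
    have hJ : ∀ i, 0 ≤ (Jmat u 0).mulVec a' i := by
      intro i
      have := PFhelp.concave_grad_ineq (u i) (hdiff i) (hconc i) ha'mem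
      rw [PFhelp.fderiv_eq_mulVec] at this
      linarith [ha'le i]
    have hJst : 0 < (Jmat u 0).mulVec a' i1 := by
      have := PFhelp.concave_grad_ineq (u i1) (hdiff i1) (hconc i1) ha'mem
      rw [PFhelp.fderiv_eq_mulVec] at this
      linarith
    have hBle : ∀ i, a' i ≤ (Bmat u 0).mulVec a' i :=
      fun i => (PFhelp.le_B_iff u hCA0 a' i).mpr (hJ i)
    have hBst : ∃ i, a' i < (Bmat u 0).mulVec a' i :=
      ⟨i1, (PFhelp.lt_B_iff u hCA0 a' i1).mpr hJst⟩
    obtain ⟨y, hy, hyst⟩ := PFhelp.bootstrap hB0nn (hirr 0 h0mem) ha'nn hBle hBst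
    have hyne : ∃ i, 0 < y i := by
      by_contra hc
      push_neg at hc
      have hy0 : y = 0 := funext fun i => le_antisymm (hc i) (hy i)
      have h1 := hyst ⟨0, hn⟩
      rw [hy0] at h1
      simp [Matrix.mulVec_zero] at h1
    obtain ⟨i0, hi0⟩ := hyne
    set g : Fin n → ℝ := fun i => if y i = 0 then 2 else (Bmat u 0).mulVec y i / y i with hg
    have huniv : (Finset.univ : Finset (Fin n)).Nonempty := ⟨⟨0, hn⟩, Finset.mem_univ _⟩
    set ρ : ℝ := Finset.univ.inf' huniv g with hρ
    have hρgt : 1 < ρ := by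
      rw [hρ, Finset.lt_inf'_iff]
      intro i _
      rw [hg]
      by_cases hyi : y i = 0
      · simp [hyi]
      · have hyipos : 0 < y i := lt_of_le_of_ne (hy i) (Ne.symm hyi)
        simp only [if_neg hyi]
        rw [lt_div_iff₀ hyipos, one_mul]
        exact hyst i
    have hsub : ∀ i, ρ * y i ≤ (Bmat u 0).mulVec y i := by
      intro i
      by_cases hyi : y i = 0
      · rw [hyi, mul_zero]
        linarith [hyst i, hy i]
      · have hyipos : 0 < y i := lt_of_le_of_ne (hy i) (Ne.symm hyi)
        have hgi : ρ ≤ g i := Finset.inf'_le g (Finset.mem_univ i)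
        rw [hg] at hgi
        simp only [if_neg hyi] at hgi
        calc ρ * y i ≤ ((Bmat u 0).mulVec y i / y i) * y i :=
              mul_le_mul_of_nonneg_right hgi hyipos.le
          _ = (Bmat u 0).mulVec y i := div_mul_cancel₀ _ (ne_of_gt hyipos)
    have hfinal := PFhelp.le_specRad_of_subinvariant hB0nn hy hi0
      (by linarith : (0:ℝ) ≤ ρ) hsub
    linarith
end

section
/- Let a* ∈ ℝ₊ⁿ be nonzero and satisfy the centrality property B(a*) a* = a*. Then a* is a Lindahl outcome: there exists an n×n real price matrix P such that (i) for every i, Σ_{j≠i} P_ij a*_j ≤ a*_i Σ_{j≠i} P_ji, and (ii) for every i and every a ∈ ℝ₊ⁿ with Σ_{j≠i} P_ij a_j ≤ a_i Σ_{j≠i} P_ji, one has u_i(a*) ≥ u_i(a). -/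
open Matrix

/-- Agent `i`'s budget constraint at prices `P` holds at the profile `x`:
`Σ_{j≠i} P_ij x_j ≤ x_i Σ_{j≠i} P_ji`. -/
def BudgetOK {n : ℕ} (P : Matrix (Fin n) (Fin n) ℝ) (i : Fin n) (x : Fin n → ℝ) : Prop :=
  ∑ j ∈ Finset.univ.erase i, P i j * x j ≤ x i * ∑ j ∈ Finset.univ.erase i, P j i

/-- `a` is a Lindahl outcome for the utility profile `u`. -/
def IsLindahl {n : ℕ} (u : Fin n → (Fin n → ℝ) → ℝ) (a : Fin n → ℝ) : Prop :=
  ∃ P : Matrix (Fin n) (Fin n) ℝ,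
    (∀ i, BudgetOK P i a) ∧
    ∀ i, ∀ x : Fin n → ℝ, (∀ j, 0 ≤ x j) → BudgetOK P i x → u i x ≤ u i a


lemma clm_sum_apply {n : ℕ} (φ : (Fin n → ℝ) →L[ℝ] ℝ) (x : Fin n → ℝ) :
    φ x = ∑ j, x j * φ (Pi.single j 1) := by
  conv_lhs => rw [← Finset.univ_sum_single x, map_sum]
  refine Finset.sum_congr rfl fun j _ => ?_
  have h : (Pi.single j (x j) : Fin n → ℝ) = x j • (Pi.single j 1 : Fin n → ℝ) := by
    rw [← Pi.single_smul, smul_eq_mul, mul_one]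
  rw [h, _root_.map_smul, smul_eq_mul]

lemma concave_grad {n : ℕ} {s : Set (Fin n → ℝ)} {f : (Fin n → ℝ) → ℝ}
    (hf : ConcaveOn ℝ s f) (hd : Differentiable ℝ f) {a x : Fin n → ℝ}
    (ha : a ∈ s) (hx : x ∈ s) :
    f x ≤ f a + fderiv ℝ f a (x - a) := by
  set v := x - a with hv
  set g : ℝ → ℝ := fun t => f (a + t • v) with hg
  have hgd : HasDerivAt g (fderiv ℝ f a v) 0 := by
    have h1 : HasDerivAt (fun t : ℝ => a + t • v) v 0 := by
      simpa using ((hasDerivAt_id (0:ℝ)).smul_const v).const_add a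
    have h2 : HasFDerivAt f (fderiv ℝ f a) (a + (0:ℝ) • v) := by
      simpa using (hd a).hasFDerivAt
    exact h2.comp_hasDerivAt 0 h1
  have key : ∀ t ∈ Set.Ioc (0:ℝ) 1, f x - f a ≤ slope g 0 t := by
    intro t ht
    have h01 : a + t • v = (1 - t) • a + t • x := by
      funext i
      simp [hv, Pi.add_apply, Pi.smul_apply, Pi.sub_apply, smul_eq_mul]
      ring
    have hcc := hf.2 ha hx (by linarith [ht.2] : (0:ℝ) ≤ 1 - t) (le_of_lt ht.1)
      (by ring)
    have hgt : (1 - t) * f a + t * f x ≤ g t := by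
      rw [hg]; simp only [h01]; simpa [smul_eq_mul] using hcc
    have hg0 : g 0 = f a := by simp [hg]
    rw [slope_def_field, le_div_iff₀ (by linarith [ht.1] : (0:ℝ) < t - 0)]
    nlinarith [ht.1]
  have tends : Filter.Tendsto (slope g 0) (nhdsWithin 0 (Set.Ioi 0))
      (nhds (fderiv ℝ f a v)) :=
    (hasDerivAt_iff_tendsto_slope.1 hgd).mono_left
      (nhdsWithin_mono 0 (fun y hy => ne_of_gt hy))
  have ev : ∀ᶠ t in nhdsWithin 0 (Set.Ioi 0), f x - f a ≤ slope g 0 t :=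
    Filter.eventually_of_mem (Ioc_mem_nhdsGT_of_mem ⟨le_refl 0, one_pos⟩) key
  have := ge_of_tendsto tends ev
  linarith

/-- If a nonzero nonnegative profile `astar` has the centrality property
`B(astar) astar = astar`, then `astar` is a Lindahl outcome. -/
theorem stmt7 {n : ℕ} (hn : 1 ≤ n)
    (u : Fin n → (Fin n → ℝ) → ℝ)
    (hconc : ∀ i, ConcaveOn ℝ (nonnegOrthant n) (u i))
    (hdiff : ∀ i, ContDiff ℝ 1 (u i))
    (hCA : ∀ a ∈ nonnegOrthant n, ∀ i, Jmat u a i i < 0)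
    (hPE : ∀ a ∈ nonnegOrthant n, ∀ i j, i ≠ j → 0 ≤ Jmat u a i j)
    (hirr : ∀ a ∈ nonnegOrthant n, MatIrreducible (Bmat u a))
    (astar : Fin n → ℝ) (hnn : ∀ i, 0 ≤ astar i) (hne : astar ≠ 0)
    (hcent : Bmat u astar *ᵥ astar = astar) :
    IsLindahl u astar := by
  set J := Jmat u astar with hJdef
  set B := Bmat u astar with hBdef
  have hmem : astar ∈ nonnegOrthant n := hnn
  have hJd : ∀ i, J i i < 0 := hCA astar hmem
  have hJo : ∀ i j, i ≠ j → 0 ≤ J i j := hPE astar hmem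
  have hBapp : ∀ i j, B i j = if i = j then 0 else J i j / (-(J i i)) := by
    intro i j; rw [hBdef]; rfl
  have hBnn : ∀ i j, 0 ≤ B i j := by
    intro i j
    rw [hBapp]
    by_cases h : i = j
    · simp [h]
    · simp only [h, if_false]
      exact div_nonneg (hJo i j h) (by linarith [hJd i])
  have hBpow : ∀ k, ∀ i j, 0 ≤ (B ^ k) i j := by
    intro k
    induction k with
    | zero => intro i j; rw [pow_zero, Matrix.one_apply]; split <;> norm_num
    | succ k ih =>
      intro i j
      rw [pow_succ, Matrix.mul_apply]
      exact Finset.sum_nonneg fun l _ => mul_nonneg (ih i l) (hBnn l j)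
  have hBka : ∀ k, (B ^ k) *ᵥ astar = astar := by
    intro k
    induction k with
    | zero => simp
    | succ k ih => rw [pow_succ, ← Matrix.mulVec_mulVec, hcent, ih]
  have hapos : ∀ i, 0 < astar i := by
    obtain ⟨j0, hj0⟩ : ∃ j0, astar j0 ≠ 0 := Function.ne_iff.1 hne
    have hj0' : 0 < astar j0 := (hnn j0).lt_of_ne (Ne.symm hj0)
    intro i
    obtain ⟨k, -, hk⟩ := hirr astar hmem i j0
    have h1 : (B ^ k *ᵥ astar) i = astar i := by rw [hBka k]
    have h2 : (B ^ k *ᵥ astar) i = ∑ l, (B ^ k) i l * astar l := by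
      simp [Matrix.mulVec, dotProduct]
    calc (0:ℝ) < (B ^ k) i j0 * astar j0 := mul_pos hk hj0'
      _ ≤ ∑ l, (B ^ k) i l * astar l :=
          Finset.single_le_sum (fun l _ => mul_nonneg (hBpow k i l) (hnn l))
            (Finset.mem_univ j0)
      _ = astar i := by rw [← h2, h1]
  -- row identity : J *ᵥ astar = 0
  have hrow : ∀ i, ∑ j, J i j * astar j = 0 := by
    intro i
    have hc : ∑ j, B i j * astar j = astar i := by
      have := congrFun hcent i
      simpa [Matrix.mulVec, dotProduct] using this
    have h1 : ∀ j, J i j * astar j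
        = B i j * astar j * (-(J i i)) + (if j = i then J i i * astar i else 0) := by
      intro j
      rw [hBapp]
      by_cases h : j = i
      · subst h; simp
      · have : ¬ (i = j) := fun hh => h hh.symm
        simp only [this, if_false, h]
        have hne' : (-(J i i)) ≠ 0 := by linarith [hJd i]
        field_simp
        rw [mul_div_assoc, div_self (ne_of_lt (hJd i)), mul_one]
        simp
    rw [Finset.sum_congr rfl fun j _ => h1 j, Finset.sum_add_distrib,
      ← Finset.sum_mul, hc, Finset.sum_ite_eq' Finset.univ i
        (fun _ => J i i * astar i)]
    simp
    ring
  have hdet : (B - 1).det = 0 := by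
    rw [← Matrix.exists_mulVec_eq_zero_iff]
    exact ⟨astar, hne, by rw [Matrix.sub_mulVec, hcent, Matrix.one_mulVec, sub_self]⟩
  have hdetT : ((B - 1)ᵀ).det = 0 := by rw [Matrix.det_transpose]; exact hdet
  obtain ⟨z, hz0, hz⟩ := Matrix.exists_mulVec_eq_zero_iff.2 hdetT
  have hzB : z ᵥ* B = z := by
    have h1 : z ᵥ* (B - 1) = 0 := by rw [← Matrix.mulVec_transpose]; exact hz
    have h2 : z ᵥ* (B - 1) = z ᵥ* B - z := by
      rw [Matrix.vecMul_sub, Matrix.vecMul_one]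
    rw [h2] at h1
    exact sub_eq_zero.1 h1
  set π : Fin n → ℝ := fun i => |z i| with hπ
  have hvecB : ∀ (y : Fin n → ℝ) j, (y ᵥ* B) j = ∑ i, y i * B i j := by
    intro y j; simp [Matrix.vecMul, dotProduct]
  have hπge : ∀ j, π j ≤ ∑ i, π i * B i j := by
    intro j
    have h1 : z j = ∑ i, z i * B i j := by rw [← hvecB, hzB]
    calc π j = |∑ i, z i * B i j| := by rw [hπ]; simp only [← h1]
      _ ≤ ∑ i, |z i * B i j| := Finset.abs_sum_le_sum_abs _ _
      _ = ∑ i, π i * B i j := Finset.sum_congr rfl fun i _ => by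
          rw [abs_mul, abs_of_nonneg (hBnn i j)]
  have hsum : ∑ j, (∑ i, π i * B i j) * astar j = ∑ j, π j * astar j := by
    have h := Matrix.dotProduct_mulVec π B astar
    rw [hcent] at h
    have h2 : ∀ j, (π ᵥ* B) j = ∑ i, π i * B i j := fun j => hvecB π j
    simpa [dotProduct, h2] using h.symm
  have hπB : ∀ j, ∑ i, π i * B i j = π j := by
    have hle : ∀ j ∈ Finset.univ, π j * astar j ≤ (∑ i, π i * B i j) * astar j :=
      fun j _ => mul_le_mul_of_nonneg_right (hπge j) (hnn j)
    have heq := (Finset.sum_eq_sum_iff_of_le hle).1 hsum.symm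
    intro j
    exact mul_right_cancel₀ (ne_of_gt (hapos j)) (heq j (Finset.mem_univ j)).symm
  have hπBk : ∀ k j, ∑ i, π i * (B ^ k) i j = π j := by
    intro k
    induction k with
    | zero => intro j; simp [Matrix.one_apply]
    | succ k ih =>
      intro j
      calc ∑ i, π i * (B ^ (k+1)) i j = ∑ i, π i * ∑ l, (B ^ k) i l * B l j := by
            simp [pow_succ, Matrix.mul_apply]
        _ = ∑ l, (∑ i, π i * (B ^ k) i l) * B l j := by
            simp_rw [Finset.mul_sum, Finset.sum_mul]
            rw [Finset.sum_comm]
            exact Finset.sum_congr rfl fun l _ => Finset.sum_congr rfl fun i _ => by ring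
        _ = ∑ l, π l * B l j := by simp [ih]
        _ = π j := hπB j
  have hπpos : ∀ j, 0 < π j := by
    obtain ⟨i0, hi0⟩ : ∃ i0, z i0 ≠ 0 := Function.ne_iff.1 hz0
    have hi0' : 0 < π i0 := abs_pos.2 hi0
    intro j
    obtain ⟨k, -, hk⟩ := hirr astar hmem i0 j
    calc (0:ℝ) < π i0 * (B ^ k) i0 j := mul_pos hi0' hk
      _ ≤ ∑ i, π i * (B ^ k) i j :=
          Finset.single_le_sum (fun i _ => mul_nonneg (abs_nonneg _) (hBpow k i j))
            (Finset.mem_univ i0)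
      _ = π j := hπBk k j
  set w : Fin n → ℝ := fun i => π i / (-(J i i)) with hw
  have hwpos : ∀ i, 0 < w i := fun i => div_pos (hπpos i) (by linarith [hJd i])
  have hcol : ∀ j, ∑ i, w i * J i j = 0 := by
    intro j
    have h1 : ∀ i, w i * J i j = π i * B i j + (if i = j then -(π j) else 0) := by
      intro i
      rw [hBapp, hw]
      by_cases h : i = j
      · subst h
        simp only [if_pos rfl, mul_zero, zero_add]
        rw [div_mul_eq_mul_div, mul_div_assoc, div_neg, div_self (ne_of_lt (hJd i)),
          mul_neg, mul_one]
        norm_num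
      · simp only [h, if_false, add_zero]
        rw [div_mul_eq_mul_div, mul_div_assoc]
    rw [Finset.sum_congr rfl fun i _ => h1 i, Finset.sum_add_distrib, hπB j]
    simp
  have hrow' : ∀ i, ∑ j ∈ Finset.univ.erase i, J i j * astar j = -(J i i * astar i) := by
    intro i
    have h := hrow i
    rw [← Finset.add_sum_erase _ _ (Finset.mem_univ i)] at h
    linarith
  have hcol' : ∀ i, ∑ j ∈ Finset.univ.erase i, w j * J j i = -(w i * J i i) := by
    intro i
    have h := hcol i
    rw [← Finset.add_sum_erase _ _ (Finset.mem_univ i)] at h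
    linarith
  refine ⟨Matrix.of fun i j => w i * J i j, ?_, ?_⟩
  · intro i
    show ∑ j ∈ Finset.univ.erase i, (w i * J i j) * astar j
        ≤ astar i * ∑ j ∈ Finset.univ.erase i, (w j * J j i)
    have hL : ∑ j ∈ Finset.univ.erase i, (w i * J i j) * astar j
        = w i * -(J i i * astar i) := by
      rw [← hrow' i, Finset.mul_sum]
      exact Finset.sum_congr rfl fun j _ => by ring
    rw [hL, hcol' i]
    apply le_of_eq
    ring
  · intro i x hx hbx
    have hxs : ∑ j ∈ Finset.univ.erase i, (w i * J i j) * x j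
        ≤ x i * ∑ j ∈ Finset.univ.erase i, w j * J j i := hbx
    rw [hcol' i] at hxs
    have h2 : ∑ j ∈ Finset.univ.erase i, J i j * x j ≤ x i * (-(J i i)) := by
      have h3 : w i * ∑ j ∈ Finset.univ.erase i, J i j * x j
          ≤ w i * (x i * (-(J i i))) := by
        calc w i * ∑ j ∈ Finset.univ.erase i, J i j * x j
            = ∑ j ∈ Finset.univ.erase i, (w i * J i j) * x j := by
              rw [Finset.mul_sum]
              exact Finset.sum_congr rfl fun j _ => by ring
          _ ≤ x i * -(w i * J i i) := hxs
          _ = w i * (x i * -(J i i)) := by ring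
      exact le_of_mul_le_mul_left h3 (hwpos i)
    have hfull : ∑ j, J i j * x j ≤ 0 := by
      rw [← Finset.add_sum_erase _ _ (Finset.mem_univ i)]
      nlinarith [h2]
    have hgrad := concave_grad (hconc i) ((hdiff i).differentiable one_ne_zero) hmem hx
    have happ : ∀ y : Fin n → ℝ, fderiv ℝ (u i) astar y = ∑ j, J i j * y j := by
      intro y
      rw [clm_sum_apply (fderiv ℝ (u i) astar) y]
      exact Finset.sum_congr rfl fun j _ => by rw [mul_comm]; rfl
    have h0 : fderiv ℝ (u i) astar (x - astar)
        = (∑ j, J i j * x j) - ∑ j, J i j * astar j := by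
      rw [happ, ← Finset.sum_sub_distrib]
      exact Finset.sum_congr rfl fun j _ => by
        simp only [Pi.sub_apply]
        ring
    rw [h0, hrow i] at hgrad
    linarith [hgrad, hfull]
end

section
/- Let a* ∈ ℝ₊ⁿ be nonzero and suppose a* is a Lindahl outcome, i.e., there exists an n×n real price matrix P such that (i) for every i, Σ_{j≠i} P_ij a*_j ≤ a*_i Σ_{j≠i} P_ji, and (ii) for every i and every a ∈ ℝ₊ⁿ with Σ_{j≠i} P_ij a_j ≤ a_i Σ_{j≠i} P_ji, one has u_i(a*) ≥ u_i(a). Then a* satisfies the centrality property B(a*) a* = a*. -/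
open Matrix

/-- If a nonzero nonnegative profile `astar` is a Lindahl outcome, then it
has the centrality property `B(astar) astar = astar`. -/
theorem stmt8 {n : ℕ} (hn : 1 ≤ n)
    (u : Fin n → (Fin n → ℝ) → ℝ)
    (hconc : ∀ i, ConcaveOn ℝ (nonnegOrthant n) (u i))
    (hdiff : ∀ i, ContDiff ℝ 1 (u i))
    (hCA : ∀ a ∈ nonnegOrthant n, ∀ i, Jmat u a i i < 0)
    (hPE : ∀ a ∈ nonnegOrthant n, ∀ i j, i ≠ j → 0 ≤ Jmat u a i j)
    (hirr : ∀ a ∈ nonnegOrthant n, MatIrreducible (Bmat u a))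
    (astar : Fin n → ℝ) (hnn : ∀ i, 0 ≤ astar i) (hne : astar ≠ 0)
    (hlin : IsLindahl u astar) :
    Bmat u astar *ᵥ astar = astar := by
  obtain ⟨P, hP1, hP2⟩ := hlin
  have hmem : astar ∈ nonnegOrthant n := hnn
  funext i
  -- derivative of t ↦ u i (t • astar) at t = 1
  have hd : HasDerivAt (fun t : ℝ => u i (t • astar)) ((fderiv ℝ (u i) astar) astar) 1 := by
    have h1 : HasDerivAt (fun t : ℝ => t • astar) astar 1 := by
      simpa using (hasDerivAt_id (1 : ℝ)).smul_const astar
    have h2 : HasFDerivAt (u i) (fderiv ℝ (u i) astar) ((1 : ℝ) • astar) := by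
      rw [one_smul]
      exact ((hdiff i).differentiable one_ne_zero astar).hasFDerivAt
    exact h2.comp_hasDerivAt 1 h1
  -- local max at t = 1
  have hmax : IsLocalMax (fun t : ℝ => u i (t • astar)) 1 := by
    filter_upwards [Ioi_mem_nhds (zero_lt_one (α := ℝ))] with t ht
    simp only [one_smul]
    refine hP2 i (t • astar) (fun j => mul_nonneg ht.le (hnn j)) ?_
    have hb := hP1 i
    unfold BudgetOK at hb ⊢
    simp only [Pi.smul_apply, smul_eq_mul]
    calc ∑ j ∈ Finset.univ.erase i, P i j * (t * astar j)
        = t * ∑ j ∈ Finset.univ.erase i, P i j * astar j := by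
          rw [Finset.mul_sum]; exact Finset.sum_congr rfl fun j _ => by ring
      _ ≤ t * (astar i * ∑ j ∈ Finset.univ.erase i, P j i) :=
          mul_le_mul_of_nonneg_left hb ht.le
      _ = t * astar i * ∑ j ∈ Finset.univ.erase i, P j i := by ring
  have hzero : (fderiv ℝ (u i) astar) astar = 0 := hmax.hasDerivAt_eq_zero hd
  -- represent the directional derivative as a sum
  have hrepr : (fderiv ℝ (u i) astar) astar = ∑ j, astar j * Jmat u astar i j := by
    have hx : astar = ∑ j, astar j • (Pi.single j 1 : Fin n → ℝ) := by
      funext k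
      simp [Finset.sum_apply, Pi.single_apply, Finset.sum_ite_eq']
    have h := congrArg (fderiv ℝ (u i) astar) hx
    rw [h, map_sum]
    exact Finset.sum_congr rfl fun j _ => by
      rw [ContinuousLinearMap.map_smul]
      simp [Jmat, smul_eq_mul]
  have hsum : ∑ j, astar j * Jmat u astar i j = 0 := by rw [← hrepr, hzero]
  have hsplit : astar i * Jmat u astar i i
      + ∑ j ∈ Finset.univ.erase i, astar j * Jmat u astar i j = 0 := by
    have h := Finset.add_sum_erase Finset.univ (fun j => astar j * Jmat u astar i j)
      (Finset.mem_univ i)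
    rw [h]
    exact hsum
  have hJii : Jmat u astar i i < 0 := hCA astar hmem i
  have hJne : (- Jmat u astar i i) ≠ 0 := by linarith
  -- compute the row of B *ᵥ astar
  have h1 : (Bmat u astar *ᵥ astar) i = ∑ j, Bmat u astar i j * astar j := by
    simp [Matrix.mulVec, dotProduct]
  rw [h1]
  have h2 : ∑ j, Bmat u astar i j * astar j
      = (∑ j ∈ Finset.univ.erase i, astar j * Jmat u astar i j) / (- Jmat u astar i i) := by
    rw [← Finset.sum_erase Finset.univ (f := fun j => Bmat u astar i j * astar j)
      (a := i) (by simp [Bmat]), Finset.sum_div]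
    refine Finset.sum_congr rfl fun j hj => ?_
    have hji : j ≠ i := Finset.ne_of_mem_erase hj
    have : ¬ (i = j) := fun h => hji h.symm
    simp only [Bmat, Matrix.of_apply, if_neg this]
    ring
  rw [h2]
  have h3 : ∑ j ∈ Finset.univ.erase i, astar j * Jmat u astar i j
      = astar i * (- Jmat u astar i i) := by linarith
  rw [h3, mul_div_assoc, div_self hJne, mul_one]
end

section
/- Let a* ∈ ℝⁿ have all entries strictly positive, suppose B(a*) a* = a*, and let θ ∈ ℝⁿ be a strictly positive row vector with θ B(a*) = θ. Define prices P_ij = θ_i J_ij(a*) for i ≠ j. Then each agent optimizes at these prices: for every i and every a ∈ ℝ₊ⁿ satisfying Σ_{j≠i} P_ij a_j ≤ a_i Σ_{j≠i} P_ji, one has u_i(a*) ≥ u_i(a). -/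
open Matrix

open Set Filter in
lemma concave_grad_s11 {E : Type*} [NormedAddCommGroup E] [NormedSpace ℝ E]
    {S : Set E} {f : E → ℝ} (hf : ConcaveOn ℝ S f) {a x : E}
    (ha : a ∈ S) (hx : x ∈ S) {L : E →L[ℝ] ℝ} (hL : HasFDerivAt f L a) :
    f x ≤ f a + L (x - a) := by
  set g : ℝ → ℝ := fun t => f (a + t • (x - a)) with hgdef
  have hline : HasDerivAt (fun t : ℝ => a + t • (x - a)) (x - a) (0 : ℝ) := by
    simpa using ((hasDerivAt_id (0 : ℝ)).smul_const (x - a)).const_add a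
  have hL' : HasFDerivAt f L (a + (0 : ℝ) • (x - a)) := by simpa using hL
  have hg : HasDerivAt g (L (x - a)) 0 := hL'.comp_hasDerivAt 0 hline
  have hgw : HasDerivWithinAt g (L (x - a)) (Ioi (0 : ℝ)) 0 := hg.hasDerivWithinAt
  rw [hasDerivWithinAt_iff_tendsto_slope' (by simp)] at hgw
  have hkey : f x - f a ≤ L (x - a) := by
    refine ge_of_tendsto hgw ?_
    filter_upwards [Ioc_mem_nhdsGT_of_mem (by simp : (0:ℝ) ∈ Ico (0:ℝ) 1)] with t ht
    have ht0 : 0 < t := ht.1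
    have hcomb := hf.2 ha hx (by linarith [ht.2] : (0:ℝ) ≤ 1 - t) ht0.le (by ring)
    have heq : (1 - t) • a + t • x = a + t • (x - a) := by
      simp [smul_sub, sub_smul]; abel
    rw [heq] at hcomb
    have hsub : t * (f x - f a) ≤ g t - g 0 := by
      simp only [hgdef, zero_smul, add_zero, smul_eq_mul] at hcomb ⊢
      nlinarith
    rw [slope_def_field, sub_zero, le_div_iff₀ ht0]
    linarith
  linarith



/-- At the guessed Lindahl prices `P_ij = θ_i J_ij(astar)` (for `i ≠ j`),
every agent is optimizing: `astar` maximizes `u_i` over all nonnegative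
profiles satisfying agent `i`'s budget constraint. Utilities are normalized
so that `J_ii(astar) = -1`. -/
theorem stmt11 {n : ℕ} (hn : 1 ≤ n)
    (u : Fin n → (Fin n → ℝ) → ℝ)
    (hconc : ∀ i, ConcaveOn ℝ (nonnegOrthant n) (u i))
    (hdiff : ∀ i, ContDiff ℝ 1 (u i))
    (hCA : ∀ a ∈ nonnegOrthant n, ∀ i, Jmat u a i i < 0)
    (hPE : ∀ a ∈ nonnegOrthant n, ∀ i j, i ≠ j → 0 ≤ Jmat u a i j)
    (hirr : ∀ a ∈ nonnegOrthant n, MatIrreducible (Bmat u a))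
    (astar : Fin n → ℝ) (hastar : ∀ i, 0 < astar i)
    (hnorm : ∀ i, Jmat u astar i i = -1)
    (hcent : Bmat u astar *ᵥ astar = astar)
    (θ : Fin n → ℝ) (hθ : ∀ i, 0 < θ i)
    (hθB : θ ᵥ* Bmat u astar = θ)
    (P : Matrix (Fin n) (Fin n) ℝ)
    (hP : ∀ i j, i ≠ j → P i j = θ i * Jmat u astar i j) :
    ∀ i, ∀ x : Fin n → ℝ, (∀ j, 0 ≤ x j) → BudgetOK P i x → u i x ≤ u i astar := by
  intro i x hx hbud
  have hastarS : astar ∈ nonnegOrthant n := fun j => (hastar j).le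
  have hxS : x ∈ nonnegOrthant n := hx
  have hL : HasFDerivAt (u i) (fderiv ℝ (u i) astar) astar :=
    ((hdiff i).differentiable one_ne_zero astar).hasFDerivAt
  have hgrad := concave_grad_s11 (hconc i) hastarS hxS hL
  set L := fderiv ℝ (u i) astar with hLdef
  -- express L (x - astar) as a sum
  have hv : (x - astar : Fin n → ℝ) = ∑ j, (x j - astar j) • (Pi.single j 1 : Fin n → ℝ) := by
    ext k
    simp [Pi.single_apply, Finset.sum_ite_eq, Finset.mem_univ]
  have hLsum : L (x - astar) = ∑ j, (x j - astar j) * Jmat u astar i j := by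
    rw [hv, map_sum]
    refine Finset.sum_congr rfl fun j _ => ?_
    rw [L.map_smul, smul_eq_mul]
    rfl
  -- fact A : ∑_{j≠i} J_ij astar_j = astar_i
  have hBoff : ∀ j k, j ≠ k → Bmat u astar j k = Jmat u astar j k := by
    intro j k hjk
    simp [Bmat, hjk, hnorm j]
  have hA : ∑ j ∈ Finset.univ.erase i, Jmat u astar i j * astar j = astar i := by
    have h1 := congrFun hcent i
    rw [mulVec, dotProduct] at h1
    rw [← h1, ← Finset.add_sum_erase _ _ (Finset.mem_univ i)]
    rw [show Bmat u astar i i = 0 by simp [Bmat]]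
    rw [zero_mul, zero_add]
    exact Finset.sum_congr rfl fun j hj => by
      rw [hBoff i j (Ne.symm (Finset.ne_of_mem_erase hj))]
  -- fact B : ∑_{j≠i} P_ji = θ_i
  have hB : ∑ j ∈ Finset.univ.erase i, P j i = θ i := by
    have h1 := congrFun hθB i
    rw [vecMul, dotProduct] at h1
    rw [← h1, ← Finset.add_sum_erase _ _ (Finset.mem_univ i)]
    rw [show Bmat u astar i i = 0 by simp [Bmat]]
    rw [mul_zero, zero_add]
    exact Finset.sum_congr rfl fun j hj => by
      rw [hP j i (Finset.ne_of_mem_erase hj), hBoff j i (Finset.ne_of_mem_erase hj)]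
  -- budget : ∑_{j≠i} J_ij x_j ≤ x_i
  have hbud2 : ∑ j ∈ Finset.univ.erase i, Jmat u astar i j * x j ≤ x i := by
    unfold BudgetOK at hbud
    rw [hB] at hbud
    have hsum : ∑ j ∈ Finset.univ.erase i, P i j * x j
        = θ i * ∑ j ∈ Finset.univ.erase i, Jmat u astar i j * x j := by
      rw [Finset.mul_sum]
      exact Finset.sum_congr rfl fun j hj => by
        rw [hP i j (Ne.symm (Finset.ne_of_mem_erase hj))]; ring
    rw [hsum, mul_comm (x i)] at hbud
    exact le_of_mul_le_mul_left hbud (hθ i)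
  -- conclude
  have hLle : L (x - astar) ≤ 0 := by
    rw [hLsum, ← Finset.add_sum_erase _ _ (Finset.mem_univ i), hnorm i]
    have hsplit : ∑ j ∈ Finset.univ.erase i, (x j - astar j) * Jmat u astar i j
        = ∑ j ∈ Finset.univ.erase i, Jmat u astar i j * x j
          - ∑ j ∈ Finset.univ.erase i, Jmat u astar i j * astar j := by
      rw [← Finset.sum_sub_distrib]
      exact Finset.sum_congr rfl fun j _ => by ring
    rw [hsplit, hA]
    linarith [hbud2]
  linarith [hgrad, hLle]
end

section
/- Let a* be a Pareto efficient action profile with all entries strictly positive, and let θ be strictly positive Pareto weights satisfying θ B(a*) = θ. Let M ⊆ {1,…,n} with complement M^c. Then the cost of separation satisfies c_M(a*) ≤ Σ (θ_i/θ_j) B_ij(a*) a*_j, where the sum runs over all ordered pairs (i,j) with exactly one of i, j in M; that is, for every ε > 0 there exists a transfer profile (m_i)_{i∈N} deterring deviations from a* with Σ_i m_i(a*) ≤ Σ (θ_i/θ_j) B_ij(a*) a*_j + ε. -/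
open Matrix

/-- The transfer profile `m` deters deviations from `astar` by the coalition
`M`: the restriction of `astar` to `M` is Pareto efficient for `M` under the
transfer-augmented utilities `ũ_i = u_i + m_i`, holding the actions of
agents outside `M` fixed at `astar`. -/
def Deters {n : ℕ} (u m : Fin n → (Fin n → ℝ) → ℝ) (astar : Fin n → ℝ)
    (M : Finset (Fin n)) : Prop :=
  ¬ ∃ a : Fin n → ℝ, (∀ j, 0 ≤ a j) ∧ (∀ j ∉ M, a j = astar j) ∧
      (∀ i ∈ M, u i astar + m i astar ≤ u i a + m i a) ∧
      ∃ i ∈ M, u i astar + m i astar < u i a + m i a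

open AffineMap in
/-- If `F` is concave on `s`, differentiable at `x` with derivative `D`, and
`D (y - x) ≤ 0` for `y ∈ s`, then `F y ≤ F x`. -/
lemma concave_le_of_fderiv_nonpos {E : Type*} [NormedAddCommGroup E] [NormedSpace ℝ E]
    {s : Set E} {F : E → ℝ} {D : E →L[ℝ] ℝ} (hF : ConcaveOn ℝ s F)
    {x y : E} (hx : x ∈ s) (hy : y ∈ s) (hD : HasFDerivAt F D x)
    (hd : D (y - x) ≤ 0) : F y ≤ F x := by
  set g : ℝ → ℝ := F ∘ (lineMap x y : ℝ →ᵃ[ℝ] E) with hg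
  have hgsub : Set.Icc (0:ℝ) 1 ⊆ (lineMap x y : ℝ →ᵃ[ℝ] E) ⁻¹' s := fun t ht =>
    hF.1.lineMap_mem hx hy ht
  have hgc : ConcaveOn ℝ (Set.Icc (0:ℝ) 1) g :=
    ((hF.comp_affineMap (lineMap x y)).subset hgsub (convex_Icc 0 1))
  have hgd : HasDerivAt g (D (y - x)) 0 := by
    have h1 : HasDerivAt (fun t : ℝ => (lineMap x y : ℝ →ᵃ[ℝ] E) t) (y - x) 0 :=
      hasDerivAt_lineMap
    have hD0 : HasFDerivAt F D ((lineMap x y : ℝ →ᵃ[ℝ] E) 0) := by simpa using hD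
    have h2 := hD0.comp_hasDerivAt (x := (0:ℝ)) h1
    simpa [hg, Function.comp] using h2
  have hslope := hgc.slope_le_of_hasDerivAt (Set.mem_Icc.2 ⟨le_rfl, zero_le_one⟩)
    (Set.mem_Icc.2 ⟨zero_le_one, le_rfl⟩) zero_lt_one hgd
  have heq : slope g 0 1 = F y - F x := by
    simp [slope_def_field, hg, Function.comp]
  rw [heq] at hslope
  linarith

/-- Bound on the cost of separation: for every `ε > 0` there is a
nonnegative transfer profile deterring deviations from `astar` by both `M`
and its complement whose total cost at `astar` is at most
`Σ (θ_i/θ_j) B_ij(astar) astar_j + ε`, the sum over ordered pairs `(i,j)`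
with exactly one element in `M`. Utilities are normalized so that
`J_ii(a) = -1` everywhere. -/
theorem stmt15 {n : ℕ} (hn : 1 ≤ n)
    (u : Fin n → (Fin n → ℝ) → ℝ)
    (hconc : ∀ i, ConcaveOn ℝ (nonnegOrthant n) (u i))
    (hdiff : ∀ i, ContDiff ℝ 1 (u i))
    (hnorm : ∀ a ∈ nonnegOrthant n, ∀ i, Jmat u a i i = -1)
    (hPE : ∀ a ∈ nonnegOrthant n, ∀ i j, i ≠ j → 0 ≤ Jmat u a i j)
    (hirr : ∀ a ∈ nonnegOrthant n, MatIrreducible (Bmat u a))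
    (astar : Fin n → ℝ) (hastar : ∀ i, 0 < astar i)
    (hpareto : ¬ ParetoImprovable u astar)
    (θ : Fin n → ℝ) (hθ : ∀ i, 0 < θ i)
    (hθB : θ ᵥ* Bmat u astar = θ)
    (M : Finset (Fin n)) :
    ∀ ε : ℝ, 0 < ε →
      ∃ m : Fin n → (Fin n → ℝ) → ℝ,
        (∀ i, ∀ x : Fin n → ℝ, (∀ j, 0 ≤ x j) → 0 ≤ m i x) ∧
        Deters u m astar M ∧ Deters u m astar Mᶜ ∧
        ∑ i, m i astar ≤
          (∑ i, ∑ j, if (i ∈ M ∧ j ∉ M) ∨ (i ∉ M ∧ j ∈ M) then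
              (θ i / θ j) * Bmat u astar i j * astar j else 0) + ε := by
  classical
  intro ε hε
  have horth : astar ∈ nonnegOrthant n := fun i => (hastar i).le
  have hconvO : Convex ℝ (nonnegOrthant n) := by
    intro x hx y hy a b ha hb hab i
    have : (a • x + b • y) i = a * x i + b * y i := rfl
    rw [this]
    exact add_nonneg (mul_nonneg ha (hx i)) (mul_nonneg hb (hy i))
  have hJB : ∀ i j, i ≠ j → Bmat u astar i j = Jmat u astar i j := by
    intro i j hij
    simp [Bmat, hij, hnorm astar horth i]
  have hB0 : ∀ i j, 0 ≤ Bmat u astar i j := by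
    intro i j
    rcases eq_or_ne i j with rfl | hij
    · simp [Bmat]
    · rw [hJB i j hij]; exact hPE astar horth i j hij
  -- θ J = 0
  have hθJ : ∀ k, ∑ i, θ i * Jmat u astar i k = 0 := by
    intro k
    have hBk : ∑ i, θ i * Bmat u astar i k = θ k := by
      have := congrFun hθB k
      simpa [Matrix.vecMul, dotProduct] using this
    have h1 : ∑ i, (θ i * Jmat u astar i k - θ i * Bmat u astar i k)
        = θ k * Jmat u astar k k - θ k * Bmat u astar k k := by
      apply Finset.sum_eq_single k
      · intro i _ hik
        rw [hJB i k hik]; ring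
      · intro h; exact absurd (Finset.mem_univ k) h
    rw [Finset.sum_sub_distrib, hBk] at h1
    rw [hnorm astar horth k] at h1
    have hBkk : Bmat u astar k k = 0 := by simp [Bmat]
    rw [hBkk] at h1
    linarith
  -- transfers
  set c : Fin n → ℝ := fun i =>
    ∑ j ∈ (if i ∈ M then Mᶜ else M), (θ j / θ i) * Bmat u astar j i with hcdef
  have hc0 : ∀ i, 0 ≤ c i := by
    intro i
    apply Finset.sum_nonneg
    intro j _
    exact mul_nonneg (div_nonneg (hθ j).le (hθ i).le) (hB0 j i)
  have hdu : ∀ i, Differentiable ℝ (u i) := fun i => (hdiff i).differentiable one_ne_zero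
  -- generic deterrence
  have key : ∀ S : Finset (Fin n),
      (∀ i ∈ S, c i = ∑ j ∈ Sᶜ, (θ j / θ i) * Bmat u astar j i) →
      Deters u (fun i x => c i * x i) astar S := by
    intro S hcS
    rintro ⟨a, ha0, hfix, hle, i₀, hi₀, hlt⟩
    have haorth : a ∈ nonnegOrthant n := ha0
    set F : (Fin n → ℝ) → ℝ := fun x => ∑ i ∈ S, θ i * (u i x + c i * x i) with hFdef
    have h1 : F astar < F a := by
      apply Finset.sum_lt_sum
      · intro i hi; exact mul_le_mul_of_nonneg_left (hle i hi) (hθ i).le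
      · exact ⟨i₀, hi₀, mul_lt_mul_of_pos_left hlt (hθ i₀)⟩
    set D : (Fin n → ℝ) →L[ℝ] ℝ :=
      ∑ i ∈ S, θ i • (fderiv ℝ (u i) astar + c i • ContinuousLinearMap.proj i) with hDdef
    have hFD : HasFDerivAt F D astar := by
      apply HasFDerivAt.fun_sum
      intro i _
      exact (((hdu i astar).hasFDerivAt.add
        ((ContinuousLinearMap.proj i).hasFDerivAt.const_mul (c i))).const_mul (θ i))
    set v : Fin n → ℝ := a - astar with hvdef
    have hvS : ∀ k, k ∉ S → v k = 0 := by
      intro k hk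
      simp [hvdef, hfix k hk]
    have hfder : ∀ i, fderiv ℝ (u i) astar v = ∑ k, v k * Jmat u astar i k := by
      intro i
      have hv : v = ∑ k, v k • (Pi.single k (1:ℝ) : Fin n → ℝ) := by
        funext j
        simp [Finset.sum_apply, Pi.single_apply]
      conv_lhs => rw [hv]
      rw [map_sum]
      refine Finset.sum_congr rfl fun k _ => ?_
      rw [(fderiv ℝ (u i) astar).map_smul, smul_eq_mul]
      rfl
    have hDv : D v = ∑ k ∈ S, v k * ((∑ i ∈ S, θ i * Jmat u astar i k) + θ k * c k) := by
      have h2 : D v = ∑ i ∈ S, θ i * (fderiv ℝ (u i) astar v + c i * v i) := by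
        rw [hDdef, ContinuousLinearMap.sum_apply]
        refine Finset.sum_congr rfl fun i _ => ?_
        simp only [ContinuousLinearMap.smul_apply, ContinuousLinearMap.add_apply,
          ContinuousLinearMap.proj_apply, smul_eq_mul]
      rw [h2]
      have h3 : ∀ i ∈ S, θ i * (fderiv ℝ (u i) astar v + c i * v i)
          = (∑ k, θ i * (v k * Jmat u astar i k)) + θ i * (c i * v i) := by
        intro i _
        rw [hfder i, mul_add, Finset.mul_sum]
      rw [Finset.sum_congr rfl h3, Finset.sum_add_distrib, Finset.sum_comm]
      have h4 : ∑ k, ∑ i ∈ S, θ i * (v k * Jmat u astar i k)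
          = ∑ k ∈ S, v k * ∑ i ∈ S, θ i * Jmat u astar i k := by
        rw [← Finset.sum_add_sum_compl S]
        have hz : ∑ k ∈ Sᶜ, ∑ i ∈ S, θ i * (v k * Jmat u astar i k) = 0 := by
          apply Finset.sum_eq_zero
          intro k hk
          apply Finset.sum_eq_zero
          intro i _
          rw [hvS k (Finset.mem_compl.mp hk)]
          ring
        rw [hz, add_zero]
        refine Finset.sum_congr rfl fun k _ => ?_
        rw [Finset.mul_sum]
        refine Finset.sum_congr rfl fun i _ => by ring
      rw [h4, ← Finset.sum_add_distrib]
      refine Finset.sum_congr rfl fun k _ => by ring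
    have hzero : ∀ k ∈ S, (∑ i ∈ S, θ i * Jmat u astar i k) + θ k * c k = 0 := by
      intro k hk
      have hck : θ k * c k = ∑ j ∈ Sᶜ, θ j * Jmat u astar j k := by
        rw [hcS k hk, Finset.mul_sum]
        refine Finset.sum_congr rfl fun j hj => ?_
        have hjk : j ≠ k := fun h => (Finset.mem_compl.mp hj) (h ▸ hk)
        rw [hJB j k hjk, div_mul_eq_mul_div, mul_div_assoc']
        exact mul_div_cancel_left₀ _ (hθ k).ne'
      rw [hck, Finset.sum_add_sum_compl S]
      exact hθJ k
    have hDv0 : D v = 0 := by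
      rw [hDv]
      apply Finset.sum_eq_zero
      intro k hk
      rw [hzero k hk, mul_zero]
    -- concavity of F
    have hFc : ConcaveOn ℝ (nonnegOrthant n) F := by
      have : ∀ T : Finset (Fin n),
          ConcaveOn ℝ (nonnegOrthant n) (fun x => ∑ i ∈ T, θ i * (u i x + c i * x i)) := by
        intro T
        induction T using Finset.induction_on with
        | empty => simpa using concaveOn_const 0 hconvO
        | @insert j T hj ih =>
          have hlin : ConcaveOn ℝ (nonnegOrthant n) (fun x : Fin n → ℝ => c j * x j) := by
            refine ⟨hconvO, ?_⟩
            intro x _ y _ p q hp hq hpq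
            have key2 : p • (c j * x j) + q • (c j * y j) = c j * (p • x + q • y) j := by
              have h : (p • x + q • y) j = p * x j + q * y j := rfl
              rw [h]; simp only [smul_eq_mul]; ring
            exact le_of_eq key2
          have hsummand : ConcaveOn ℝ (nonnegOrthant n)
              (fun x => θ j * (u j x + c j * x j)) := by
            have := ((hconc j).add hlin).smul (hθ j).le
            simpa [smul_eq_mul] using this
          have := hsummand.add ih
          have heq : (fun x => ∑ i ∈ insert j T, θ i * (u i x + c i * x i))
              = fun x => θ j * (u j x + c j * x j) + ∑ i ∈ T, θ i * (u i x + c i * x i) := by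
            funext x
            rw [Finset.sum_insert hj]
          rw [heq]
          exact this
      exact this S
    have h2 : F a ≤ F astar :=
      concave_le_of_fderiv_nonpos hFc horth haorth hFD (by rw [← hvdef, hDv0])
    linarith
  refine ⟨fun i x => c i * x i, ?_, ?_, ?_, ?_⟩
  · intro i x hx
    exact mul_nonneg (hc0 i) (hx i)
  · refine key M fun i hi => ?_
    rw [hcdef]
    simp [hi]
  · refine key Mᶜ fun i hi => ?_
    rw [hcdef]
    have hiM : i ∉ M := Finset.mem_compl.mp hi
    simp [hiM, compl_compl]
  · have hcost : ∑ i, c i * astar i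
        = ∑ i, ∑ j, if (i ∈ M ∧ j ∉ M) ∨ (i ∉ M ∧ j ∈ M) then
            (θ i / θ j) * Bmat u astar i j * astar j else 0 := by
      rw [Finset.sum_comm]
      refine Finset.sum_congr rfl fun j _ => ?_
      have hfil : (Finset.univ.filter fun i =>
          (i ∈ M ∧ j ∉ M) ∨ (i ∉ M ∧ j ∈ M)) = (if j ∈ M then Mᶜ else M) := by
        ext i
        by_cases hj : j ∈ M <;> by_cases hi : i ∈ M <;>
          simp [hj, hi]
      calc c j * astar j
          = ∑ i ∈ (if j ∈ M then Mᶜ else M), (θ i / θ j) * Bmat u astar i j * astar j := by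
            rw [hcdef]; rw [Finset.sum_mul]
        _ = ∑ i, if (i ∈ M ∧ j ∉ M) ∨ (i ∉ M ∧ j ∈ M) then
              (θ i / θ j) * Bmat u astar i j * astar j else 0 := by
            rw [← hfil, Finset.sum_filter]
    rw [hcost]
    linarith
end
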